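/- arXiv:1505.04345 — 5 statements merged into one kernel-verified Lean document; each statement's English description precedes it below -/
import Mathlib

section
/- (Entropy Distribution Principle) Let f: X → X be a continuous transformation of a compact metric space and Z ⊆ X an arbitrary Borel set. Suppose there exist ε > 0 and s ≥ 0 such that one can find a sequence of Borel probability measures μ_k, a constant K > 0, and a weak* limit measure ν of the sequence (μ_k) with ν(Z) > 0, satisfying limsup_{k→∞} μ_k(B_n(x,ε)) ≤ K·exp(−ns) for all sufficiently large n and every dynamical ball B_n(x,ε) having non-empty intersection with Z. Then h^B_top(Z; ε, f) ≥ s. -/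
open Filter MeasureTheory Set Topology Manifold
open scoped ENNReal NNReal

section EntropyDefs

variable {X : Type*} [MetricSpace X]

/-- The open dynamical (Bowen) ball `B_n(x,r) = {y | d_n(x,y) < r}`. -/
def dynBall (f : X → X) (x : X) (n : ℕ) (r : ℝ) : Set X :=
  {y | ∀ i < n, dist (f^[i] x) (f^[i] y) < r}

/-- The closed dynamical (Bowen) ball `{y | d_n(x,y) ≤ r}`. -/
def dynCBall (f : X → X) (x : X) (n : ℕ) (r : ℝ) : Set X :=
  {y | ∀ i < n, dist (f^[i] x) (f^[i] y) ≤ r}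

/-- `S` is an `(n,ε)`-separated subset of `E`. -/
def IsDynSep (f : X → X) (E : Set X) (n : ℕ) (ε : ℝ) (S : Set X) : Prop :=
  S ⊆ E ∧ ∀ x ∈ S, ∀ y ∈ S, x ≠ y → ∃ i < n, ε < dist (f^[i] x) (f^[i] y)

/-- The maximal cardinality `s_n(E,ε)` of an `(n,ε)`-separated subset of `E`. -/
noncomputable def sepCount (f : X → X) (E : Set X) (n : ℕ) (ε : ℝ) : ℕ :=
  sSup {k | ∃ S : Finset X, IsDynSep f E n ε ↑S ∧ S.card = k}

/-- Bowen's separated-set topological entropy of a compact set: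
`lim_{ε→0} limsup_n (1/n) log s_n(E,ε)`. -/
noncomputable def compactEnt (f : X → X) (E : Set X) : EReal :=
  ⨆ (ε : ℝ) (_ : 0 < ε),
    Filter.limsup (fun n : ℕ => ((Real.log (sepCount f E n ε) / n : ℝ) : EReal)) Filter.atTop

/-- Topological entropy of an arbitrary subset `Y`: the supremum over compact `E ⊆ Y`. -/
noncomputable def topEnt (f : X → X) (Y : Set X) : EReal :=
  ⨆ (E : Set X) (_ : IsCompact E) (_ : E ⊆ Y), compactEnt f E

/-- The sum `Σ e^{-t·u}` over a family of Bowen balls recorded as center/order pairs. -/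
noncomputable def bowenSum (t : ℝ) (s : Set (X × ℕ)) : ℝ≥0∞ :=
  ∑' p : s, ENNReal.ofReal (Real.exp (-t * ((p : X × ℕ).2 : ℝ)))

/-- `C(E;t,n,σ,f)`: infimum of `Σ e^{-t·u}` over countable covers of `E` by Bowen
balls `B_u(x,σ)` with `u ≥ n`. -/
noncomputable def bowenCn (f : X → X) (E : Set X) (t : ℝ) (σ : ℝ) (n : ℕ) : ℝ≥0∞ :=
  ⨅ (s : Set (X × ℕ)) (_ : s.Countable) (_ : ∀ p ∈ s, n ≤ p.2)
    (_ : E ⊆ ⋃ p ∈ s, dynBall f p.1 p.2 σ), bowenSum t s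

/-- `C(E;t,σ,f) = lim_{n→∞} C(E;t,n,σ,f)` (the limit of the nondecreasing sequence). -/
noncomputable def bowenC (f : X → X) (E : Set X) (t : ℝ) (σ : ℝ) : ℝ≥0∞ :=
  ⨆ n : ℕ, bowenCn f E t σ n

/-- Bowen–Hausdorff entropy at scale `σ`: `inf {t | C(E;t,σ,f) = 0}`. -/
noncomputable def bowenEntAt (f : X → X) (E : Set X) (σ : ℝ) : EReal :=
  sInf {t : EReal | ∃ t' : ℝ, t = (t' : EReal) ∧ bowenC f E t' σ = 0}

/-- Bowen–Hausdorff entropy `h^B_top(f,E) = lim_{σ→0} h^B_top(E;σ,f)`. -/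
noncomputable def bowenEnt (f : X → X) (E : Set X) : EReal :=
  ⨆ (σ : ℝ) (_ : 0 < σ), bowenEntAt f E σ

/-- Feng–Huang packing pre-measure `P^s_{N,ε}(E)`: supremum of `Σ e^{-s·n_i}` over countable
pairwise disjoint families of closed Bowen balls of orders `n_i ≥ N` centered in `E`. -/
noncomputable def packPre (f : X → X) (s : ℝ) (N : ℕ) (ε : ℝ) (E : Set X) : ℝ≥0∞ :=
  ⨆ (D : Set (X × ℕ)) (_ : D.Countable) (_ : ∀ p ∈ D, p.1 ∈ E ∧ N ≤ p.2)
    (_ : D.Pairwise fun p q => Disjoint (dynCBall f p.1 p.2 ε) (dynCBall f q.1 q.2 ε)),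
    ∑' p : D, ENNReal.ofReal (Real.exp (-s * ((p : X × ℕ).2 : ℝ)))

/-- `P^s_ε(E) = lim_{N→∞} P^s_{N,ε}(E)` (the limit of the nonincreasing sequence). -/
noncomputable def packPreLim (f : X → X) (s ε : ℝ) (E : Set X) : ℝ≥0∞ :=
  ⨅ N : ℕ, packPre f s N ε E

/-- Feng–Huang packing measure `𝒫^s_ε(E) = inf {Σ_i P^s_ε(E_i) | E ⊆ ⋃ E_i}`. -/
noncomputable def packMeas (f : X → X) (s ε : ℝ) (E : Set X) : ℝ≥0∞ :=
  ⨅ (C : ℕ → Set X) (_ : E ⊆ ⋃ i, C i), ∑' i, packPreLim f s ε (C i)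

/-- Packing topological entropy at scale `ε`: the critical exponent of `s ↦ 𝒫^s_ε(E)`. -/
noncomputable def packEntAt (f : X → X) (E : Set X) (ε : ℝ) : EReal :=
  sInf {t : EReal | ∃ t' : ℝ, t = (t' : EReal) ∧ packMeas f t' ε E = 0}

/-- Packing topological entropy `h^P_top(f,E) = lim_{ε→0} h^P_top(f,E,ε)`. -/
noncomputable def packEnt (f : X → X) (E : Set X) : EReal :=
  ⨆ (ε : ℝ) (_ : 0 < ε), packEntAt f E ε

/-- The restriction of `f` to `Λ` is topologically mixing. -/
def TopMixingOn (f : X → X) (Λ : Set X) : Prop :=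
  ∀ U V : Set X, IsOpen U → IsOpen V → (U ∩ Λ).Nonempty → (V ∩ Λ).Nonempty →
    ∃ N : ℕ, ∀ n ≥ N, (f^[n] '' (U ∩ Λ) ∩ (V ∩ Λ)).Nonempty

end EntropyDefs


lemma dynBall_isOpen {X : Type*} [MetricSpace X] (f : X → X) (hf : Continuous f)
    (x : X) (n : ℕ) (r : ℝ) : IsOpen (dynBall f x n r) := by
  have h : dynBall f x n r = ⋂ i ∈ Finset.range n, f^[i] ⁻¹' Metric.ball (f^[i] x) r := by
    ext y
    simp [dynBall, Metric.mem_ball, dist_comm]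
  rw [h]
  exact isOpen_biInter_finset fun i _ => Metric.isOpen_ball.preimage (hf.iterate i)

/-- **Entropy Distribution Principle.** Let `f : X → X` be a continuous map of a compact metric
space and `Z ⊆ X` a Borel set. Suppose for some `ε > 0` and `s ≥ 0` there are Borel probability
measures `μ_k`, a constant `K > 0` and a weak* limit measure `ν` of the sequence `(μ_k)` with
`ν(Z) > 0`, such that `limsup_k μ_k(B_n(x,ε)) ≤ K e^{-ns}` for all sufficiently large `n` and
every dynamical ball `B_n(x,ε)` meeting `Z`. Then `h^B_top(Z; ε, f) ≥ s`. -/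
theorem entropy_distribution_principle
    {X : Type*} [MetricSpace X] [CompactSpace X] [MeasurableSpace X] [BorelSpace X]
    (f : X → X) (hf : Continuous f) (Z : Set X) (hZ : MeasurableSet Z)
    (ε s : ℝ) (hε : 0 < ε) (hs : 0 ≤ s)
    (μ : ℕ → ProbabilityMeasure X) (K : ℝ) (hK : 0 < K)
    (ν : ProbabilityMeasure X)
    (hlim : ∃ φ : ℕ → ℕ, StrictMono φ ∧ Tendsto (fun k => μ (φ k)) atTop (𝓝 ν))
    (hνZ : 0 < (ν : Measure X) Z)
    (hball : ∃ N : ℕ, ∀ n ≥ N, ∀ x : X, (dynBall f x n ε ∩ Z).Nonempty →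
      Filter.limsup (fun k : ℕ => (μ k : Measure X) (dynBall f x n ε)) Filter.atTop
        ≤ ENNReal.ofReal (K * Real.exp (-(n : ℝ) * s))) :
    (s : EReal) ≤ bowenEntAt f Z ε := by
  obtain ⟨φ, hφ, hconv⟩ := hlim
  obtain ⟨N₀, hN₀⟩ := hball
  refine le_sInf ?_
  rintro b ⟨t, rfl, hC⟩
  rw [EReal.coe_le_coe_iff]
  by_contra hts
  push_neg at hts
  set C : ℝ≥0∞ := ENNReal.ofReal (K * Real.exp ((t - s) * N₀)) with hCdef
  have hCpos : 0 < C := ENNReal.ofReal_pos.mpr (by positivity)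
  have hCtop : C ≠ ⊤ := ENNReal.ofReal_ne_top
  -- per-ball bound
  have hballν : ∀ p : X × ℕ, N₀ ≤ p.2 → (dynBall f p.1 p.2 ε ∩ Z).Nonempty →
      (ν : Measure X) (dynBall f p.1 p.2 ε) ≤ C * ENNReal.ofReal (Real.exp (-t * (p.2 : ℝ))) := by
    intro p hp hne
    have h1 : (ν : Measure X) (dynBall f p.1 p.2 ε)
        ≤ liminf (fun k => (μ (φ k) : Measure X) (dynBall f p.1 p.2 ε)) atTop :=
      ProbabilityMeasure.le_liminf_measure_open_of_tendsto hconv (dynBall_isOpen f hf _ _ _)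
    have h2 : liminf (fun k => (μ (φ k) : Measure X) (dynBall f p.1 p.2 ε)) atTop
        ≤ limsup (fun k => (μ (φ k) : Measure X) (dynBall f p.1 p.2 ε)) atTop :=
      liminf_le_limsup
    have h3 : limsup (fun k => (μ (φ k) : Measure X) (dynBall f p.1 p.2 ε)) atTop
        ≤ limsup (fun k : ℕ => (μ k : Measure X) (dynBall f p.1 p.2 ε)) atTop := by
      have heq : (fun k => (μ (φ k) : Measure X) (dynBall f p.1 p.2 ε))
          = (fun k : ℕ => (μ k : Measure X) (dynBall f p.1 p.2 ε)) ∘ φ := rfl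
      rw [heq, limsup_comp]
      exact limsup_le_limsup_of_le hφ.tendsto_atTop
    have h4 := hN₀ p.2 hp p.1 hne
    refine ((h1.trans h2).trans (h3.trans h4)).trans ?_
    rw [hCdef, ← ENNReal.ofReal_mul (by positivity)]
    apply ENNReal.ofReal_le_ofReal
    rw [mul_assoc, ← Real.exp_add]
    apply mul_le_mul_of_nonneg_left _ hK.le
    apply Real.exp_le_exp.mpr
    have hp' : (N₀ : ℝ) ≤ (p.2 : ℝ) := Nat.cast_le.mpr hp
    nlinarith [mul_le_mul_of_nonpos_left hp' (by linarith : t - s ≤ 0)]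
  -- lower bound for each admissible cover
  have key : ∀ cov : Set (X × ℕ), cov.Countable → (∀ p ∈ cov, N₀ ≤ p.2) →
      Z ⊆ ⋃ p ∈ cov, dynBall f p.1 p.2 ε →
      (ν : Measure X) Z / C ≤ bowenSum t cov := by
    intro cov hcnt hord hcov
    set cov' : Set (X × ℕ) := {p ∈ cov | (dynBall f p.1 p.2 ε ∩ Z).Nonempty} with hcov'def
    have hsub : cov' ⊆ cov := fun p hp => hp.1
    have hcnt' : cov'.Countable := hcnt.mono hsub
    have hcov' : Z ⊆ ⋃ p ∈ cov', dynBall f p.1 p.2 ε := by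
      intro z hz
      obtain ⟨p, hp, hzp⟩ := mem_iUnion₂.1 (hcov hz)
      exact mem_iUnion₂.2 ⟨p, ⟨hp, ⟨z, hzp, hz⟩⟩, hzp⟩
    have step1 : (ν : Measure X) Z
        ≤ ∑' p : cov', (ν : Measure X) (dynBall f (p : X × ℕ).1 (p : X × ℕ).2 ε) :=
      (measure_mono hcov').trans (measure_biUnion_le _ hcnt' _)
    have step2 : ∑' p : cov', (ν : Measure X) (dynBall f (p : X × ℕ).1 (p : X × ℕ).2 ε)
        ≤ C * ∑' p : cov', ENNReal.ofReal (Real.exp (-t * (((p : X × ℕ).2 : ℕ) : ℝ))) := by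
      rw [← ENNReal.tsum_mul_left]
      exact ENNReal.tsum_le_tsum fun p => hballν p.1 (hord _ (hsub p.2)) p.2.2
    have step3 : ∑' p : cov', ENNReal.ofReal (Real.exp (-t * (((p : X × ℕ).2 : ℕ) : ℝ)))
        ≤ bowenSum t cov :=
      ENNReal.summable.tsum_le_tsum_of_inj (Set.inclusion hsub) (Set.inclusion_injective hsub)
        (fun _ _ => zero_le) (fun p => le_rfl) ENNReal.summable
    have hZC : (ν : Measure X) Z ≤ C * bowenSum t cov :=
      step1.trans (step2.trans (by gcongr))
    exact ENNReal.div_le_of_le_mul' hZC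
  have hbound : (ν : Measure X) Z / C ≤ bowenCn f Z t ε N₀ :=
    le_iInf fun cov => le_iInf fun hcnt => le_iInf fun hord => le_iInf fun hcov =>
      key cov hcnt hord hcov
  have hzero : bowenCn f Z t ε N₀ = 0 := by
    have h := le_iSup (fun n => bowenCn f Z t ε n) N₀
    rw [show (⨆ n, bowenCn f Z t ε n) = bowenC f Z t ε from rfl, hC] at h
    exact le_antisymm h zero_le
  rw [hzero] at hbound
  exact absurd hbound (ENNReal.div_pos hνZ.ne' hCtop).not_ge
end

section
/- Let (X,d) be a compact metric space, f: X → X a homeomorphism, μ an ergodic f-invariant Borel probability measure, and Γ ⊆ X a measurable set with μ(Γ) > 0. Let δ > 0 and let ξ be a finite measurable partition of X with diam ξ < δ which refines {Γ, X∖Γ}. For ρ > 0 and a positive integer s, define Γ_{s,ρ} = { x ∈ Γ : for every l ≥ s there exists m ∈ [l, (1+ρ)l] with f^m(x) ∈ ξ(x) }, where ξ(x) is the element of ξ containing x. Then lim_{s→∞} μ(Γ_{s,ρ}) = μ(Γ). -/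
open Filter MeasureTheory Set Topology Manifold
open scoped ENNReal NNReal

namespace RecAux

variable {X : Type*} [MeasurableSpace X]

lemma measurable_birkhoffSum {f : X → X} (hf : Measurable f) {g : X → ℝ}
    (hg : Measurable g) (n : ℕ) : Measurable (birkhoffSum f g n) :=
  Finset.measurable_sum _ fun k _ => hg.comp (hf.iterate k)

/-- Garsia's maximal ergodic theorem, special form: if almost every point has some positive
Birkhoff sum, then the integral of the function is nonnegative. -/
lemma maximal {μ : Measure X} [IsProbabilityMeasure μ] {f : X → X}
    (hf : MeasurePreserving f μ μ) {g : X → ℝ} (hg : Measurable g)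
    {K : ℝ} (hK : ∀ x, |g x| ≤ K)
    (hA : ∀ᵐ x ∂μ, ∃ n, 0 < birkhoffSum f g n x) :
    0 ≤ ∫ x, g x ∂μ := by
  haveI : Nonempty X := μ.nonempty_of_neZero
  have hK0 : 0 ≤ K := le_trans (abs_nonneg _) (hK (Classical.arbitrary X))
  set S : ℕ → X → ℝ := birkhoffSum f g with hS
  have hSm : ∀ n, Measurable (S n) := measurable_birkhoffSum hf.measurable hg
  have hgi : Integrable g μ := by
    refine Integrable.mono' (integrable_const K) hg.aestronglyMeasurable ?_
    filter_upwards with x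
    simpa [Real.norm_eq_abs] using hK x
  -- the running maxima
  set M : ℕ → X → ℝ := fun N =>
    Nat.rec (fun _ => (0 : ℝ)) (fun N mN x => max (mN x) (S (N + 1) x)) N with hM
  have hM0 : ∀ x, M 0 x = 0 := fun _ => rfl
  have hMsucc : ∀ N x, M (N + 1) x = max (M N x) (S (N + 1) x) := fun _ _ => rfl
  have hMm : ∀ N, Measurable (M N) := by
    intro N
    induction N with
    | zero => exact measurable_const
    | succ N ih => exact ih.max (hSm _)
  have hMnn : ∀ N x, 0 ≤ M N x := by
    intro N
    induction N with
    | zero => intro x; simp [hM0]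
    | succ N ih => intro x; exact le_trans (ih x) (le_max_left _ _)
  have hSb : ∀ n x, |S n x| ≤ n * K := by
    intro n x
    calc |S n x| ≤ ∑ k ∈ Finset.range n, |g (f^[k] x)| := by
          simpa [hS, birkhoffSum] using Finset.abs_sum_le_sum_abs (fun k => g (f^[k] x))
            (Finset.range n)
      _ ≤ ∑ _k ∈ Finset.range n, K := Finset.sum_le_sum fun k _ => hK _
      _ = n * K := by simp [mul_comm]
  have hMb : ∀ N x, M N x ≤ N * K := by
    intro N
    induction N with
    | zero => intro x; simp [hM0]
    | succ N ih =>
      intro x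
      rw [hMsucc]
      refine max_le (le_trans (ih x) ?_) (le_trans (le_abs_self _) (hSb (N + 1) x))
      have : (N : ℝ) ≤ (N + 1 : ℕ) := by push_cast; linarith
      exact mul_le_mul_of_nonneg_right this hK0
  -- every Birkhoff sum up to N is below the running maximum
  have hMle : ∀ N n, n ≤ N → ∀ x, S n x ≤ M N x := by
    intro N
    induction N with
    | zero =>
      intro n hn x
      interval_cases n
      simp [hS, hM0]
    | succ N ih =>
      intro n hn x
      rcases Nat.lt_or_ge n (N + 1) with h | h
      · exact le_trans (ih n (by omega) x) (by rw [hMsucc]; exact le_max_left _ _)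
      · have : n = N + 1 := by omega
        subst this
        rw [hMsucc]
        exact le_max_right _ _
  -- key pointwise inequality on the set where the maximum is positive
  have hkey : ∀ N x, 0 < M N x → M N x ≤ g x + M N (f x) := by
    intro N x hx
    -- the max is attained
    have hattain : ∀ N' x', 0 < M N' x' → ∃ n, 1 ≤ n ∧ n ≤ N' ∧ M N' x' = S n x' := by
      intro N'
      induction N' with
      | zero => intro x' hx'; rw [hM0] at hx'; exact absurd hx' (lt_irrefl _)
      | succ N' ih =>
        intro x' hx'
        rw [hMsucc] at hx' ⊢
        rcases le_total (S (N' + 1) x') (M N' x') with h | h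
        · obtain ⟨n, h1, h2, h3⟩ := ih x' (by rw [max_eq_left h] at hx'; exact hx')
          exact ⟨n, h1, by omega, by rw [max_eq_left h]; exact h3⟩
        · exact ⟨N' + 1, by omega, le_rfl, by rw [max_eq_right h]⟩
    obtain ⟨n, h1, h2, h3⟩ := hattain N x hx
    obtain ⟨m, rfl⟩ : ∃ m, n = m + 1 := ⟨n - 1, by omega⟩
    rw [h3, hS, birkhoffSum_succ']
    have : birkhoffSum f g m (f x) ≤ M N (f x) := hMle N m (by omega) (f x)
    linarith
  -- integrability of the maxima
  have hMi : ∀ N, Integrable (M N) μ := by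
    intro N
    refine Integrable.mono' (integrable_const ((N : ℝ) * K)) (hMm N).aestronglyMeasurable ?_
    filter_upwards with x
    rw [Real.norm_eq_abs, abs_of_nonneg (hMnn N x)]
    exact hMb N x
  have hMfi : ∀ N, Integrable (fun x => M N (f x)) μ := by
    intro N
    refine Integrable.mono' (integrable_const ((N : ℝ) * K))
      ((hMm N).comp hf.measurable).aestronglyMeasurable ?_
    filter_upwards with x
    rw [Real.norm_eq_abs, abs_of_nonneg (hMnn N (f x))]
    exact hMb N (f x)
  set A : ℕ → Set X := fun N => {x | 0 < M N x} with hA'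
  have hAm : ∀ N, MeasurableSet (A N) := fun N => measurableSet_lt measurable_const (hMm N)
  have hMmono : ∀ x, Monotone fun N => M N x := by
    intro x
    apply monotone_nat_of_le_succ
    intro N
    rw [hMsucc]
    exact le_max_left _ _
  have hAmono : Monotone A := fun a b hab x hx => lt_of_lt_of_le hx (hMmono x hab)
  -- the basic integral inequality for each N
  have hNineq : ∀ N, 0 ≤ ∫ x in A N, g x ∂μ := by
    intro N
    have h1 : ∫ x in A N, (M N x - M N (f x)) ∂μ ≤ ∫ x in A N, g x ∂μ := by
      refine setIntegral_mono_on ((hMi N).sub (hMfi N)).integrableOn hgi.integrableOn (hAm N) ?_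
      intro x hx
      have := hkey N x hx
      linarith
    have h2 : ∫ x in A N, (M N x - M N (f x)) ∂μ
        = ∫ x in A N, M N x ∂μ - ∫ x in A N, M N (f x) ∂μ :=
      integral_sub (hMi N).integrableOn (hMfi N).integrableOn
    have h3 : ∫ x in A N, M N x ∂μ = ∫ x, M N x ∂μ := by
      have hind : (A N).indicator (M N) = M N := by
        funext x
        by_cases hx : x ∈ A N
        · simp [indicator_of_mem hx]
        · have h0 : ¬ 0 < M N x := hx
          have : M N x = 0 := le_antisymm (not_lt.1 h0) (hMnn N x)
          simp [indicator_of_notMem hx, this]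
      rw [← integral_indicator (hAm N), hind]
    have h4 : ∫ x in A N, M N (f x) ∂μ ≤ ∫ x, M N (f x) ∂μ :=
      setIntegral_le_integral (hMfi N) (Eventually.of_forall fun x => hMnn N (f x))
    have h5 : ∫ x, M N (f x) ∂μ = ∫ x, M N x ∂μ := by
      calc ∫ x, M N (f x) ∂μ = ∫ y, M N y ∂(Measure.map f μ) :=
            (integral_map hf.measurable.aemeasurable
              (by rw [hf.map_eq]; exact (hMm N).aestronglyMeasurable)).symm
        _ = ∫ y, M N y ∂μ := by rw [hf.map_eq]
    linarith
  -- pass to the limit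
  have hU : ∀ᵐ x ∂μ, x ∈ ⋃ N, A N := by
    filter_upwards [hA] with x hx
    obtain ⟨n, hn⟩ := hx
    exact mem_iUnion.2 ⟨n, lt_of_lt_of_le hn (hMle n n le_rfl x)⟩
  have htendsto := tendsto_setIntegral_of_monotone hAm hAmono hgi.integrableOn
  have hlim : 0 ≤ ∫ x in ⋃ N, A N, g x ∂μ :=
    ge_of_tendsto' htendsto hNineq
  have hcompl : μ (⋃ N, A N)ᶜ = 0 := by
    have := hU
    rw [ae_iff] at this
    convert this using 2
    rfl
  have hfull : ∫ x in ⋃ N, A N, g x ∂μ = ∫ x, g x ∂μ := by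
    rw [← integral_add_compl (MeasurableSet.iUnion hAm) hgi]
    have : μ.restrict (⋃ N, A N)ᶜ = 0 := Measure.restrict_eq_zero.2 hcompl
    rw [this]
    simp
  linarith [hlim, hfull.symm ▸ hlim]

/-- Upper density bound: the Birkhoff sums of an indicator eventually grow slower than `b * n`
for any `b` above the measure of the set. -/
lemma upper {μ : Measure X} [IsProbabilityMeasure μ] {f : X → X}
    (hErg : Ergodic f μ) {C : Set X} (hC : MeasurableSet C) {b : ℝ}
    (hb : (μ C).toReal < b) :
    ∀ᵐ x ∂μ, ∀ᶠ n : ℕ in atTop, birkhoffSum f (C.indicator 1) n x < b * n := by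
  have hfm : Measurable f := hErg.toMeasurePreserving.measurable
  set g : X → ℝ := C.indicator 1 with hg
  have hgm : Measurable g := measurable_one.indicator hC
  have hg01 : ∀ x, 0 ≤ g x ∧ g x ≤ 1 := by
    intro x
    by_cases h : x ∈ C <;> simp [hg, Set.indicator_apply, h]
  set S := birkhoffSum f g with hSdef
  have hSm : ∀ n, Measurable (S n) := measurable_birkhoffSum hfm hgm
  set c := (μ C).toReal with hc
  set b' := (c + b) / 2 with hb'
  have hcb' : c < b' := by rw [hb']; linarith
  have hb'b : b' < b := by rw [hb']; linarith
  set E : ℝ → Set X := fun a => {x | ∀ N : ℕ, ∃ n, N ≤ n ∧ a * n ≤ S n x} with hE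
  have hEm : ∀ a, MeasurableSet (E a) := by
    intro a
    have : E a = ⋂ N : ℕ, ⋃ n : ℕ, ⋃ _ : N ≤ n, {x | a * n ≤ S n x} := by
      ext x
      simp [hE]
    rw [this]
    exact MeasurableSet.iInter fun N => MeasurableSet.iUnion fun n =>
      MeasurableSet.iUnion fun _ => measurableSet_le measurable_const (hSm n)
  -- pushing forward along the dynamics
  have hpush : ∀ a a' : ℝ, a' < a → ∀ x, x ∈ E a → f x ∈ E a' := by
    intro a a' haa' x hx N
    obtain ⟨N₀, hN₀⟩ := exists_nat_ge ((1 + |a'|) / (a - a'))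
    obtain ⟨n, hn1, hn2⟩ := hx (max (N + 1) (N₀ + 1))
    obtain ⟨m, rfl⟩ : ∃ m, n = m + 1 := ⟨n - 1, by omega⟩
    refine ⟨m, by omega, ?_⟩
    have hsm : S (m + 1) x = g x + S m (f x) := birkhoffSum_succ' f g m x
    have hup : g x ≤ 1 := (hg01 x).2
    have hNm : (N₀ : ℝ) ≤ m := by
      have : N₀ ≤ m := by omega
      exact_mod_cast this
    have hden : (0 : ℝ) < a - a' := by linarith
    have hdiv : (1 + |a'|) ≤ (a - a') * m := by
      have h := (div_le_iff₀ hden).1 (hN₀.trans hNm)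
      linarith [h]
    have key : a' * m ≤ a * (m + 1) - 1 := by
      nlinarith [abs_nonneg a', le_abs_self a', neg_abs_le a']
    push_cast at hn2 ⊢
    calc a' * m ≤ a * (m + 1) - 1 := key
      _ ≤ S (m + 1) x - g x := by linarith
      _ = S m (f x) := by rw [hsm]; ring
  have hpull : ∀ a a' : ℝ, a' < a → ∀ x, f x ∈ E a → x ∈ E a' := by
    intro a a' haa' x hx N
    obtain ⟨N₀, hN₀⟩ := exists_nat_ge (|a'| / (a - a'))
    obtain ⟨n, hn1, hn2⟩ := hx (max N N₀)
    refine ⟨n + 1, by omega, ?_⟩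
    have hsm : S (n + 1) x = g x + S n (f x) := birkhoffSum_succ' f g n x
    have hgx : 0 ≤ g x := (hg01 x).1
    have hden : (0 : ℝ) < a - a' := by linarith
    have hNn : (N₀ : ℝ) ≤ n := by
      have : N₀ ≤ n := by omega
      exact_mod_cast this
    have hdiv : |a'| ≤ (a - a') * n := by
      have h := (div_le_iff₀ hden).1 (hN₀.trans hNn)
      linarith [h]
    have key : a' * (n + 1) ≤ a * n := by
      nlinarith [le_abs_self a']
    push_cast at hn2 ⊢
    rw [hsm]
    linarith
  set D : Set X := ⋃ k : ℕ, E (b' + 1 / (k + 1)) with hD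
  have hDm : MeasurableSet D := MeasurableSet.iUnion fun k => hEm _
  have hstep : ∀ k : ℕ, b' + 1 / ((k : ℝ) + 1 + 1) < b' + 1 / ((k : ℝ) + 1) := by
    intro k
    have h1 : (0 : ℝ) < (k : ℝ) + 1 := by positivity
    have h2 : ((k : ℝ) + 1) < (k : ℝ) + 1 + 1 := by linarith
    have := one_div_lt_one_div_of_lt h1 h2
    linarith
  have hDinv : f ⁻¹' D = D := by
    ext x
    simp only [mem_preimage, hD, mem_iUnion]
    constructor
    · rintro ⟨k, hk⟩
      refine ⟨k + 1, hpull _ _ ?_ x hk⟩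
      push_cast
      exact hstep k
    · rintro ⟨k, hk⟩
      refine ⟨k + 1, hpush _ _ ?_ x hk⟩
      push_cast
      exact hstep k
  rcases hErg.ae_empty_or_univ hDm hDinv with hD0 | hD1
  · -- the bad set is null: extract the eventual bound
    obtain ⟨k, hk⟩ := exists_nat_one_div_lt (show (0 : ℝ) < b - b' by linarith)
    have hnull : μ D = 0 := ae_eq_empty.1 hD0
    have hae : ∀ᵐ x ∂μ, x ∉ D := by
      rw [ae_iff]
      simpa using hnull
    filter_upwards [hae] with x hx
    have hxE : x ∉ E (b' + 1 / ((k : ℝ) + 1)) := fun h => hx (mem_iUnion.2 ⟨k, h⟩)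
    simp only [hE, mem_setOf_eq] at hxE
    push_neg at hxE
    obtain ⟨N, hN⟩ := hxE
    rw [eventually_atTop]
    refine ⟨max N 1, fun n hn => ?_⟩
    have h1 := hN n (le_trans (le_max_left _ _) hn)
    have hn1 : (1 : ℝ) ≤ n := by
      have : 1 ≤ n := le_trans (le_max_right _ _) hn
      exact_mod_cast this
    have hkb : 1 / ((k : ℝ) + 1) < b - b' := hk
    nlinarith
  · -- the bad set has full measure: contradiction with the maximal ergodic theorem
    exfalso
    set φ : X → ℝ := fun x => g x - b' with hφ
    have hφm : Measurable φ := hgm.sub measurable_const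
    have hφb : ∀ x, |φ x| ≤ 1 + |b'| := by
      intro x
      obtain ⟨h1, h2⟩ := hg01 x
      simp only [hφ]
      rw [abs_le]
      constructor <;> nlinarith [le_abs_self b', neg_abs_le b']
    have hbirk : ∀ n (x : X), birkhoffSum f φ n x = S n x - b' * n := by
      intro n x
      simp only [hφ, birkhoffSum, Finset.sum_sub_distrib, Finset.sum_const,
        Finset.card_range, nsmul_eq_mul, hSdef]
      ring
    have haefull : ∀ᵐ x ∂μ, x ∈ D := by
      have : μ Dᶜ = 0 := ae_eq_univ.1 hD1
      rw [ae_iff]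
      exact this
    have hae : ∀ᵐ x ∂μ, ∃ n, 0 < birkhoffSum f φ n x := by
      filter_upwards [haefull] with x hx
      obtain ⟨k, hk⟩ := mem_iUnion.1 hx
      obtain ⟨n, hn1, hn2⟩ := hk 1
      refine ⟨n, ?_⟩
      rw [hbirk]
      have hη : 0 < 1 / ((k : ℝ) + 1) := by positivity
      have hn1' : (1 : ℝ) ≤ n := by exact_mod_cast hn1
      nlinarith
    have hmax := maximal hErg.toMeasurePreserving hφm hφb hae
    have hgi : Integrable g μ := by
      refine Integrable.mono' (integrable_const 1) hgm.aestronglyMeasurable ?_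
      filter_upwards with x
      obtain ⟨h1, h2⟩ := hg01 x
      rw [Real.norm_eq_abs, abs_of_nonneg h1]
      exact h2
    have hint : ∫ x, φ x ∂μ = c - b' := by
      rw [hφ]
      rw [integral_sub hgi (integrable_const _)]
      rw [hg, integral_indicator_one hC, integral_const]
      simp [hc]
      rfl
    rw [hint] at hmax
    linarith

/-- Lower density bound. -/
lemma lower {μ : Measure X} [IsProbabilityMeasure μ] {f : X → X}
    (hErg : Ergodic f μ) {C : Set X} (hC : MeasurableSet C) {b : ℝ}
    (hb : b < (μ C).toReal) :
    ∀ᵐ x ∂μ, ∀ᶠ n : ℕ in atTop, b * n < birkhoffSum f (C.indicator 1) n x := by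
  have hcompl : (μ Cᶜ).toReal < 1 - b := by
    have h1 : μ Cᶜ = 1 - μ C := by
      rw [measure_compl hC (measure_ne_top μ C), measure_univ]
    have h2 : (μ Cᶜ).toReal = 1 - (μ C).toReal := by
      rw [h1, ENNReal.toReal_sub_of_le prob_le_one ENNReal.one_ne_top]
      simp
    rw [h2]
    linarith
  filter_upwards [upper hErg hC.compl hcompl] with x hx
  filter_upwards [hx] with n hn
  have hsum : birkhoffSum f (Cᶜ.indicator (1 : X → ℝ)) n x
      = (n : ℝ) - birkhoffSum f (C.indicator (1 : X → ℝ)) n x := by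
    have hpt : ∀ y : X, (Cᶜ.indicator (1 : X → ℝ)) y = 1 - C.indicator 1 y := by
      intro y
      by_cases h : y ∈ C <;> simp [Set.indicator_apply, h]
    simp only [birkhoffSum, hpt, Finset.sum_sub_distrib, Finset.sum_const, Finset.card_range,
      nsmul_eq_mul, mul_one]
  rw [hsum] at hn
  linarith

end RecAux

/-- **Lemma 2.8.** Let `μ` be an ergodic invariant measure of the homeomorphism `f` of a compact
metric space, `Γ` a measurable set with `μ(Γ) > 0`, and `ξ` a finite measurable partition
(encoded by a measurable map `P : X → Fin k`) with `diam ξ < δ` refining `{Γ, X∖Γ}`. For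
`ρ > 0` and `s ∈ ℕ`, let `Γ_{s,ρ} = {x ∈ Γ | ∀ l ≥ s, ∃ m ∈ [l,(1+ρ)l], f^m(x) ∈ ξ(x)}`.
Then `μ(Γ_{s,ρ}) → μ(Γ)` as `s → ∞`. -/
theorem recurrence_to_partition_element
    {X : Type*} [MetricSpace X] [CompactSpace X] [MeasurableSpace X] [BorelSpace X]
    (f : X ≃ₜ X) (μ : Measure X) [IsProbabilityMeasure μ] (hErg : Ergodic (⇑f) μ)
    (Γ : Set X) (hΓm : MeasurableSet Γ) (hΓ : 0 < μ Γ)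
    (δ : ℝ) (hδ : 0 < δ) {k : ℕ} (P : X → Fin k) (hP : Measurable P)
    (hdiam : ∀ i : Fin k, Metric.diam (P ⁻¹' {i}) < δ)
    (href : ∀ i : Fin k, P ⁻¹' {i} ⊆ Γ ∨ P ⁻¹' {i} ⊆ Γᶜ)
    (ρ : ℝ) (hρ : 0 < ρ) :
    Tendsto
      (fun s : ℕ => μ {x ∈ Γ | ∀ l ≥ s, ∃ m : ℕ, l ≤ m ∧ (m : ℝ) ≤ (1 + ρ) * (l : ℝ) ∧
        P ((⇑f)^[m] x) = P x})
      atTop (𝓝 (μ Γ)) := by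
  classical
  have hfm : Measurable (⇑f) := f.continuous.measurable
  set g : Fin k → X → ℝ := fun i => (P ⁻¹' {i}).indicator 1 with hgdef
  set S : Fin k → ℕ → X → ℝ := fun i => birkhoffSum (⇑f) (g i) with hSdef
  set c : Fin k → ℝ := fun i => (μ (P ⁻¹' {i})).toReal with hcdef
  have hCm : ∀ i : Fin k, MeasurableSet (P ⁻¹' {i}) := fun i => hP (measurableSet_singleton i)
  -- a.e. density bounds for each positive-measure partition element
  have H1 : ∀ᵐ x ∂μ, ∀ i : Fin k, 0 < μ (P ⁻¹' {i}) →
      (∀ᶠ n : ℕ in atTop, S i n x < (c i * (1 + ρ / 2)) * n) ∧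
      (∀ᶠ n : ℕ in atTop, (c i * (1 + ρ / 2) / (1 + ρ)) * n < S i n x) := by
    rw [ae_all_iff]
    intro i
    by_cases hi : 0 < μ (P ⁻¹' {i})
    · have hci : 0 < c i := ENNReal.toReal_pos hi.ne' (measure_ne_top _ _)
      have hub : c i < c i * (1 + ρ / 2) := by nlinarith
      have hlb : c i * (1 + ρ / 2) / (1 + ρ) < c i := by
        rw [div_lt_iff₀ (by linarith)]
        nlinarith
      have h1 := RecAux.upper hErg (hCm i) hub
      have h2 := RecAux.lower hErg (hCm i) hlb
      filter_upwards [h1, h2] with x hx1 hx2 _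
      exact ⟨hx1, hx2⟩
    · filter_upwards with x h
      exact absurd h hi
  -- a.e. points lie in a positive-measure partition element
  have H2 : ∀ᵐ x ∂μ, μ (P ⁻¹' {P x}) ≠ 0 := by
    have hsub : {x | μ (P ⁻¹' {P x}) = 0}
        ⊆ ⋃ i : Fin k, ⋃ _ : μ (P ⁻¹' {i}) = 0, P ⁻¹' {i} := by
      intro x hx
      exact mem_iUnion.2 ⟨P x, mem_iUnion.2 ⟨hx, rfl⟩⟩
    have hnull : μ {x | μ (P ⁻¹' {P x}) = 0} = 0 :=
      measure_mono_null hsub (measure_iUnion_null fun i => measure_iUnion_null fun h => h)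
    rw [ae_iff]
    simpa using hnull
  set Γs : ℕ → Set X := fun s => {x ∈ Γ | ∀ l ≥ s, ∃ m : ℕ, l ≤ m ∧
      (m : ℝ) ≤ (1 + ρ) * (l : ℝ) ∧ P ((⇑f)^[m] x) = P x} with hΓsdef
  -- a.e. point of Γ belongs to some Γs
  have hmain : ∀ᵐ x ∂μ, x ∈ Γ → x ∈ ⋃ s, Γs s := by
    filter_upwards [H1, H2] with x hx1 hx2 hxΓ
    have hi : 0 < μ (P ⁻¹' {P x}) := pos_iff_ne_zero.2 hx2
    obtain ⟨hup, hlow⟩ := hx1 (P x) hi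
    obtain ⟨N₁, hN₁⟩ := eventually_atTop.1 hup
    obtain ⟨N₂, hN₂⟩ := eventually_atTop.1 hlow
    set b : ℝ := c (P x) * (1 + ρ / 2) with hbdef
    set b₂ : ℝ := b / (1 + ρ) with hb₂def
    have hci : 0 < c (P x) := ENNReal.toReal_pos hi.ne' (measure_ne_top _ _)
    have hb : 0 < b := by
      rw [hbdef]
      nlinarith
    have hb₂ : 0 < b₂ := div_pos hb (by linarith)
    refine mem_iUnion.2 ⟨N₁ + N₂ + 1, hxΓ, ?_⟩
    intro l hl
    have hl1 : 1 ≤ l := by omega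
    have hlR0 : (0 : ℝ) ≤ (l : ℝ) := Nat.cast_nonneg l
    have hlle : (l : ℝ) ≤ (1 + ρ) * l := by nlinarith
    have hlR : (0 : ℝ) ≤ (1 + ρ) * l := le_trans hlR0 hlle
    set n₂ : ℕ := ⌊(1 + ρ) * (l : ℝ)⌋₊ + 1 with hn₂def
    have hln : l ≤ ⌊(1 + ρ) * (l : ℝ)⌋₊ := Nat.le_floor hlle
    have hn₂l : l < n₂ := by omega
    have hlt : (1 + ρ) * (l : ℝ) < (n₂ : ℝ) := by
      have h := Nat.lt_floor_add_one ((1 + ρ) * (l : ℝ))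
      rw [hn₂def]
      push_cast
      linarith
    have h1 : S (P x) l x < b * l := hN₁ l (by omega)
    have h2 : b₂ * n₂ < S (P x) n₂ x := hN₂ n₂ (by omega)
    have hchain : S (P x) l x < S (P x) n₂ x := by
      have h1ρ : (1 + ρ) ≠ 0 := by linarith
      have e1 : b₂ * ((1 + ρ) * l) = b * l := by
        rw [hb₂def]
        field_simp
      have e2 : b₂ * ((1 + ρ) * l) < b₂ * n₂ := by
        exact mul_lt_mul_of_pos_left hlt hb₂
      linarith
    by_contra hcon
    push_neg at hcon
    have hzero : ∀ m ∈ Finset.Ico l n₂, g (P x) ((⇑f)^[m] x) = 0 := by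
      intro m hm
      obtain ⟨hm1, hm2⟩ := Finset.mem_Ico.1 hm
      have hm3 : (m : ℝ) ≤ (1 + ρ) * l := by
        have hmfl : m ≤ ⌊(1 + ρ) * (l : ℝ)⌋₊ := by omega
        exact le_trans (Nat.cast_le.2 hmfl) (Nat.floor_le hlR)
      have hne := hcon m hm1 hm3
      have hnm : (⇑f)^[m] x ∉ P ⁻¹' {P x} := by
        intro hmem
        exact hne hmem
      simp [hgdef, indicator_of_notMem hnm]
    have heq : S (P x) n₂ x = S (P x) l x := by
      have hsplit : S (P x) n₂ x = S (P x) l x + ∑ m ∈ Finset.Ico l n₂, g (P x) ((⇑f)^[m] x) := by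
        simp only [hSdef, birkhoffSum]
        rw [Finset.range_eq_Ico, Finset.range_eq_Ico]
        exact (Finset.sum_Ico_consecutive _ (Nat.zero_le l) (le_of_lt hn₂l)).symm
      rw [hsplit, Finset.sum_eq_zero hzero, add_zero]
    rw [heq] at hchain
    exact lt_irrefl _ hchain
  -- conclude by monotone convergence of measures
  have hmono : Monotone Γs := by
    intro s s' hss' x hx
    exact ⟨hx.1, fun l hl => hx.2 l (le_trans hss' hl)⟩
  have htends := tendsto_measure_iUnion_atTop (μ := μ) hmono
  have hequ : μ (⋃ s, Γs s) = μ Γ := by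
    apply le_antisymm
    · exact measure_mono (iUnion_subset fun s x hx => hx.1)
    · have hdiffnull : μ (Γ \ ⋃ s, Γs s) = 0 := by
        rw [ae_iff] at hmain
        refine measure_mono_null ?_ hmain
        intro x hx
        simp only [mem_setOf_eq, Classical.not_imp]
        exact ⟨hx.1, hx.2⟩
      calc μ Γ ≤ μ ((⋃ s, Γs s) ∪ (Γ \ ⋃ s, Γs s)) := by
            apply measure_mono
            intro x hx
            by_cases h : x ∈ ⋃ s, Γs s
            · exact Or.inl h
            · exact Or.inr ⟨hx, h⟩
        _ ≤ μ (⋃ s, Γs s) + μ (Γ \ ⋃ s, Γs s) := measure_union_le _ _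
        _ = μ (⋃ s, Γs s) := by rw [hdiffnull, add_zero]
  rw [← hequ]
  exact htends
end

section
/- Let (X,d) be a compact metric space, f: X → X a homeomorphism, μ an ergodic f-invariant Borel probability measure, and Δ ⊆ X a measurable set with μ(Δ) > 0. For ρ > 0 and a positive integer s, define Δ_{s,ρ} = { x ∈ Δ : for every l ≥ s there exists m ∈ [l, (1+ρ)l] with f^m(x) ∈ Δ }. Then lim_{s→∞} μ(Δ_{s,ρ}) = μ(Δ). -/
open Filter MeasureTheory Set Topology Manifold
open scoped ENNReal NNReal

private lemma aux_limsup_le {u v : ℕ → ℝ}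
    (hvU : IsBoundedUnder (· ≤ ·) atTop v) (hvL : IsBoundedUnder (· ≥ ·) atTop v)
    (h : Tendsto (fun n => u n - v n) atTop (𝓝 0)) :
    limsup u atTop ≤ limsup v atTop := by
  have hco : IsCoboundedUnder (· ≤ ·) atTop (fun n => u n - v n) :=
    h.isBoundedUnder_ge.isCoboundedUnder_le
  have h1 : u = v + fun n => u n - v n := by funext n; simp
  calc limsup u atTop = limsup (v + fun n => u n - v n) atTop := by rw [← h1]
    _ ≤ limsup v atTop + limsup (fun n => u n - v n) atTop :=
        limsup_add_le hvL hvU hco h.isBoundedUnder_le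
    _ = limsup v atTop := by rw [h.limsup_eq, add_zero]

private lemma aux_limsup_eq {u v : ℕ → ℝ}
    (hu0 : ∀ n, 0 ≤ u n) (hu1 : ∀ n, u n ≤ 1)
    (hv0 : ∀ n, 0 ≤ v n) (hv1 : ∀ n, v n ≤ 1)
    (h : Tendsto (fun n => u n - v n) atTop (𝓝 0)) :
    limsup u atTop = limsup v atTop := by
  refine le_antisymm (aux_limsup_le (isBoundedUnder_of ⟨1, hv1⟩) (isBoundedUnder_of ⟨0, hv0⟩) h)
    (aux_limsup_le (isBoundedUnder_of ⟨1, hu1⟩) (isBoundedUnder_of ⟨0, hu0⟩) ?_)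
  have := h.neg
  simpa [neg_sub] using this

private lemma core_limsup_le {X : Type*} [MeasurableSpace X] {T : X → X} {μ : Measure X}
    [IsProbabilityMeasure μ] (hErg : Ergodic T μ)
    {φ : X → ℝ} (hφm : Measurable φ) (hφ0 : ∀ x, 0 ≤ φ x) (hφ1 : ∀ x, φ x ≤ 1) :
    ∀ᵐ x ∂μ, limsup (fun n => birkhoffSum T φ n x / n) atTop ≤ ∫ y, φ y ∂μ := by
  have hne : Nonempty X := by
    by_contra h
    rw [not_nonempty_iff] at h
    have h1 : μ univ = 1 := measure_univ
    rw [Set.univ_eq_empty_iff.2 h, measure_empty] at h1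
    exact one_ne_zero h1.symm
  have hTm : Measurable T := hErg.toMeasurePreserving.measurable
  set A : ℕ → X → ℝ := fun n x => birkhoffSum T φ n x / n with hA
  have hSmeas : ∀ n, Measurable (fun x => birkhoffSum T φ n x) := fun n =>
    Finset.measurable_sum _ (fun i _ => hφm.comp (hTm.iterate i))
  have hAmeas : ∀ n, Measurable (A n) := fun n => (hSmeas n).div_const _
  have hS0 : ∀ n x, 0 ≤ birkhoffSum T φ n x := fun n x =>
    Finset.sum_nonneg fun i _ => hφ0 _
  have hSle : ∀ n x, birkhoffSum T φ n x ≤ n := by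
    intro n x
    calc birkhoffSum T φ n x ≤ ∑ _i ∈ Finset.range n, (1:ℝ) :=
          Finset.sum_le_sum fun i _ => hφ1 _
      _ = n := by simp
  have hA0 : ∀ n x, 0 ≤ A n x := fun n x => div_nonneg (hS0 n x) (Nat.cast_nonneg n)
  have hA1 : ∀ n x, A n x ≤ 1 := by
    intro n x
    rcases Nat.eq_zero_or_pos n with rfl | hn
    · simp [hA]
    · rw [hA, div_le_one (by exact_mod_cast hn)]
      exact hSle n x
  set L : X → ℝ := fun x => limsup (fun n => A n x) atTop with hL
  have hLmeas : Measurable L := Measurable.limsup (fun n => hAmeas n)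
  have hLT : ∀ x, L (T x) = L x := by
    intro x
    refine aux_limsup_eq (fun n => hA0 n (T x)) (fun n => hA1 n (T x))
      (fun n => hA0 n x) (fun n => hA1 n x) ?_
    have heq : ∀ n : ℕ, A n (T x) - A n x = (φ (T^[n] x) - φ x) / n := by
      intro n
      rw [hA]
      simp only
      rw [div_sub_div_same, birkhoffSum_apply_sub_birkhoffSum]
    rw [funext heq]
    apply squeeze_zero_norm (a := fun n : ℕ => 2 / n)
    · intro n
      have h1 := hφ0 (T^[n] x); have h2 := hφ1 (T^[n] x)
      have h3 := hφ0 x; have h4 := hφ1 x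
      have habs : |φ (T^[n] x) - φ x| ≤ 2 := by
        rw [abs_le]; constructor <;> linarith
      rw [Real.norm_eq_abs, abs_div, Nat.abs_cast]
      exact div_le_div_of_nonneg_right habs (Nat.cast_nonneg n)
    · exact tendsto_const_div_atTop_nhds_zero_nat 2
  obtain ⟨G, hG⟩ : ∃ c, L =ᵐ[μ] fun _ => c := by
    refine hErg.ae_eq_const_of_ae_eq_comp₀ hLmeas.nullMeasurable ?_
    exact Eventually.of_forall fun x => hLT x
  have hL0 : ∀ x, 0 ≤ L x := fun x =>
    le_limsup_of_frequently_le (Frequently.of_forall fun n => hA0 n x)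
      (isBoundedUnder_of ⟨1, fun n => hA1 n x⟩)
  have hL1 : ∀ x, L x ≤ 1 := fun x =>
    limsup_le_of_le (isCoboundedUnder_le_of_le atTop fun n => hA0 n x)
      (Eventually.of_forall fun n => hA1 n x)
  have haeNeBot : (MeasureTheory.ae μ).NeBot := ae_neBot.2 (IsProbabilityMeasure.ne_zero μ)
  obtain ⟨x₀, hx₀⟩ := hG.exists
  have hG0 : 0 ≤ G := by rw [show G = L x₀ from hx₀.symm]; exact hL0 x₀
  have hG1 : G ≤ 1 := by rw [show G = L x₀ from hx₀.symm]; exact hL1 x₀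
  have hφint : Integrable φ μ := by
    refine (integrable_const (1:ℝ)).mono' hφm.aestronglyMeasurable ?_
    refine Eventually.of_forall fun x => ?_
    rw [Real.norm_eq_abs, abs_of_nonneg (hφ0 x)]
    exact hφ1 x
  have hφint0 : 0 ≤ ∫ y, φ y ∂μ := integral_nonneg hφ0
  -- main estimate
  have main : ∀ ε : ℝ, 0 < ε → G ≤ (∫ y, φ y ∂μ) + 2 * ε := by
    intro ε hε
    rcases le_or_gt G ε with hGε | hGε
    · linarith
    set η : ℝ := G - ε with hη
    have hηpos : 0 < η := by simp [hη]; linarith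
    have hη1 : η ≤ 1 := by simp [hη]; nlinarith
    set D : ℕ → Set X := fun M => {x | ∃ n, 1 ≤ n ∧ n ≤ M ∧ η * n ≤ birkhoffSum T φ n x}
      with hD
    have hDmeas : ∀ M, MeasurableSet (D M) := by
      intro M
      have : D M = ⋃ (n : ℕ) (_ : 1 ≤ n ∧ n ≤ M), {x | η * n ≤ birkhoffSum T φ n x} := by
        ext x; simp [hD]; tauto
      rw [this]
      exact MeasurableSet.iUnion fun n => MeasurableSet.iUnion fun _ =>
        measurableSet_le measurable_const (hSmeas n)
    have hDmono : Monotone D := by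
      intro i j hij x hx
      obtain ⟨n, h1, h2, h3⟩ := hx
      exact ⟨n, h1, h2.trans hij, h3⟩
    set C : Set X := {x | L x = G} with hC
    have hCmem : ∀ x ∈ C, T x ∈ C := by
      intro x hx
      show L (T x) = G
      rw [hLT]; exact hx
    have hCiter : ∀ (k : ℕ) (x : X), x ∈ C → T^[k] x ∈ C := by
      intro k
      induction k with
      | zero => intro x hx; simpa using hx
      | succ k ihk =>
        intro x hx
        rw [Function.iterate_succ_apply]
        exact ihk _ (hCmem x hx)
    have hCfull : ∀ᵐ x ∂μ, x ∈ C := hG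
    have hCD : ∀ x ∈ C, ∃ M, x ∈ D M := by
      intro x hx
      have hlt : η < limsup (fun n => A n x) atTop := by
        rw [show limsup (fun n => A n x) atTop = G from hx]
        simp [hη]; linarith
      have hfreq : ∃ᶠ n in atTop, η < A n x :=
        frequently_lt_of_lt_limsup (isCoboundedUnder_le_of_le atTop fun n => hA0 n x) hlt
      obtain ⟨n, hnA, hn1⟩ := (hfreq.and_eventually (eventually_ge_atTop 1)).exists
      refine ⟨n, n, hn1, le_refl n, ?_⟩
      have hnpos : (0:ℝ) < n := by exact_mod_cast hn1
      rw [hA] at hnA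
      have := (lt_div_iff₀ hnpos).1 hnA
      linarith
    -- choose M with small complement
    have hinter : μ (⋂ M, (D M)ᶜ) = 0 := by
      have hsub : (⋂ M, (D M)ᶜ) ⊆ Cᶜ := by
        intro x hx hxC
        obtain ⟨M, hM⟩ := hCD x hxC
        exact (mem_iInter.1 hx M) hM
      have hCnull : μ Cᶜ = 0 := by
        rw [← compl_compl C] at hCfull ⊢
        exact ae_iff.1 (hCfull.mono fun x hx => by simpa using hx)
      exact measure_mono_null hsub hCnull
    have htend : Tendsto (fun M => μ (D M)ᶜ) atTop (𝓝 0) := by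
      have := tendsto_measure_iInter_atTop (μ := μ)
        (fun M => ((hDmeas M).compl.nullMeasurableSet))
        (fun i j hij => compl_subset_compl.2 (hDmono hij)) ⟨0, measure_ne_top μ _⟩
      rwa [hinter] at this
    have hev : ∀ᶠ M in atTop, μ (D M)ᶜ < ENNReal.ofReal ε := by
      refine htend.eventually_lt_const ?_
      simpa using hε
    obtain ⟨M, hMε⟩ := hev.exists
    set B : Set X := (D M)ᶜ with hB
    set ψ : X → ℝ := fun x => φ x + B.indicator (fun _ => (1:ℝ)) x with hψ
    have hBmeas : MeasurableSet B := (hDmeas M).compl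
    have hψm : Measurable ψ := hφm.add (measurable_const.indicator hBmeas)
    have hψ0 : ∀ x, 0 ≤ ψ x := fun x =>
      add_nonneg (hφ0 x) (Set.indicator_nonneg (fun _ _ => zero_le_one) x)
    have hψφ : ∀ x, φ x ≤ ψ x := fun x =>
      le_add_of_nonneg_right (Set.indicator_nonneg (fun _ _ => zero_le_one) x)
    have hψB : ∀ x ∈ B, (1:ℝ) ≤ ψ x := by
      intro x hx
      rw [hψ]
      simp only
      rw [Set.indicator_of_mem hx]
      linarith [hφ0 x]
    have hψint : Integrable ψ μ :=
      hφint.add ((integrable_const (1:ℝ)).indicator hBmeas)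
    have hψval : ∫ x, ψ x ∂μ ≤ (∫ y, φ y ∂μ) + ε := by
      rw [hψ]
      simp only
      rw [integral_add hφint ((integrable_const (1:ℝ)).indicator hBmeas),
        integral_indicator_const (1:ℝ) hBmeas]
      have : μ.real B ≤ ε := ENNReal.toReal_le_of_le_ofReal hε.le hMε.le
      simpa using this
    -- key induction
    have key : ∀ N : ℕ, ∀ x ∈ C, η * ((N:ℝ) - M) ≤ birkhoffSum T ψ N x := by
      intro N
      induction N using Nat.strong_induction_on with
      | _ N ih =>
        intro x hxC
        by_cases hNM : N ≤ M
        · have h1 : ((N:ℝ) - M) ≤ 0 := by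
            rw [sub_nonpos]
            exact_mod_cast hNM
          have h2 : (0:ℝ) ≤ birkhoffSum T ψ N x :=
            Finset.sum_nonneg fun i _ => hψ0 _
          nlinarith
        · push_neg at hNM
          by_cases hxB : x ∈ B
          · obtain ⟨N', rfl⟩ : ∃ N', N = N' + 1 := ⟨N - 1, by omega⟩
            rw [birkhoffSum_succ']
            have h1 : η * ((N':ℝ) - M) ≤ birkhoffSum T ψ N' (T x) :=
              ih N' (by omega) (T x) (hCmem x hxC)
            have h2 : (1:ℝ) ≤ ψ x := hψB x hxB
            have hexp : η * (((N':ℝ) + 1) - M) = η * ((N':ℝ) - M) + η := by ring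
            push_cast
            rw [hexp]
            linarith
          · have hxD : x ∈ D M := by
              by_contra hcon
              exact hxB hcon
            obtain ⟨n, hn1, hnM, hnS⟩ := hxD
            obtain ⟨k, rfl⟩ : ∃ k, N = n + k := ⟨N - n, by omega⟩
            rw [birkhoffSum_add]
            have h1 : η * ((k:ℝ) - M) ≤ birkhoffSum T ψ k (T^[n] x) :=
              ih k (by omega) _ (hCiter n x hxC)
            have h2 : birkhoffSum T φ n x ≤ birkhoffSum T ψ n x :=
              Finset.sum_le_sum fun i _ => hψφ _
            have hexp : η * (((n:ℝ) + (k:ℝ)) - M) = η * (n:ℝ) + η * ((k:ℝ) - M) := by ring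
            push_cast
            rw [hexp]
            linarith
    -- integration
    have hcompint : ∀ i : ℕ, Integrable (fun x => ψ (T^[i] x)) μ := by
      intro i
      exact ((hErg.toMeasurePreserving.iterate i).integrable_comp
        hψm.aestronglyMeasurable).2 hψint
    have hSψint : ∀ N : ℕ, Integrable (fun x => birkhoffSum T ψ N x) μ := by
      intro N
      have : (fun x => birkhoffSum T ψ N x)
          = fun x => ∑ i ∈ Finset.range N, ψ (T^[i] x) := rfl
      rw [this]
      exact integrable_finset_sum _ fun i _ => hcompint i
    have hint_iter : ∀ N : ℕ, ∫ x, birkhoffSum T ψ N x ∂μ = N * ∫ x, ψ x ∂μ := by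
      intro N
      have h1 : ∫ x, birkhoffSum T ψ N x ∂μ
          = ∑ i ∈ Finset.range N, ∫ x, ψ (T^[i] x) ∂μ :=
        integral_finset_sum _ fun i _ => hcompint i
      have h2 : ∀ i : ℕ, ∫ x, ψ (T^[i] x) ∂μ = ∫ x, ψ x ∂μ := by
        intro i
        have hmp := hErg.toMeasurePreserving.iterate i
        calc ∫ x, ψ (T^[i] x) ∂μ = ∫ y, ψ y ∂(Measure.map (T^[i]) μ) :=
              (integral_map hmp.measurable.aemeasurable
                (by rw [hmp.map_eq]; exact hψm.aestronglyMeasurable)).symm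
          _ = ∫ x, ψ x ∂μ := by rw [hmp.map_eq]
      rw [h1]
      simp [h2, Finset.sum_const]
    have hineq : ∀ N : ℕ, η * ((N:ℝ) - M) ≤ N * ((∫ y, φ y ∂μ) + ε) := by
      intro N
      have h1 : η * ((N:ℝ) - M) = ∫ _x, η * ((N:ℝ) - M) ∂μ := by
        rw [integral_const]; simp
      have h2 : ∫ _x, η * ((N:ℝ) - M) ∂μ ≤ ∫ x, birkhoffSum T ψ N x ∂μ := by
        refine integral_mono_ae (integrable_const _) (hSψint N) ?_
        filter_upwards [hCfull] with x hx
        exact key N x hx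
      have h3 : (N:ℝ) * ∫ x, ψ x ∂μ ≤ N * ((∫ y, φ y ∂μ) + ε) := by
        apply mul_le_mul_of_nonneg_left hψval (Nat.cast_nonneg N)
      rw [h1]
      calc ∫ _x, η * ((N:ℝ) - M) ∂μ ≤ ∫ x, birkhoffSum T ψ N x ∂μ := h2
        _ = N * ∫ x, ψ x ∂μ := hint_iter N
        _ ≤ N * ((∫ y, φ y ∂μ) + ε) := h3
    -- take the limit
    have hlim : Tendsto (fun N : ℕ => η * (1 - (M:ℝ) / N)) atTop (𝓝 η) := by
      have h0 : Tendsto (fun N : ℕ => (M:ℝ) / N) atTop (𝓝 0) :=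
        tendsto_const_div_atTop_nhds_zero_nat (M:ℝ)
      have := (tendsto_const_nhds (x := (1:ℝ)) (f := atTop (α := ℕ))).sub h0
      have h2 := (tendsto_const_nhds (x := η) (f := atTop (α := ℕ))).mul this
      simpa using h2
    have hfin : η ≤ (∫ y, φ y ∂μ) + ε := by
      refine le_of_tendsto hlim ?_
      filter_upwards [eventually_ge_atTop 1] with N hN
      have hNpos : (0:ℝ) < N := by exact_mod_cast hN
      have heq : η * (1 - (M:ℝ) / N) = η * ((N:ℝ) - M) / N := by
        field_simp
      rw [heq, div_le_iff₀ hNpos]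
      calc η * ((N:ℝ) - M) ≤ N * ((∫ y, φ y ∂μ) + ε) := hineq N
        _ = ((∫ y, φ y ∂μ) + ε) * N := by ring
    simp only [hη] at hfin
    linarith
  -- conclude
  have hGle : G ≤ ∫ y, φ y ∂μ := by
    refine le_of_forall_pos_le_add fun ε hε => ?_
    have := main (ε / 2) (by linarith)
    linarith
  filter_upwards [hG] with x hx
  rw [show limsup (fun n => birkhoffSum T φ n x / n) atTop = L x from rfl, hx]
  exact hGle

private lemma birkhoff_aux {X : Type*} [MeasurableSpace X] {T : X → X} {μ : Measure X}
    [IsProbabilityMeasure μ] (hErg : Ergodic T μ)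
    {φ : X → ℝ} (hφm : Measurable φ) (hφ0 : ∀ x, 0 ≤ φ x) (hφ1 : ∀ x, φ x ≤ 1) :
    ∀ᵐ x ∂μ, Tendsto (fun n => birkhoffSum T φ n x / n) atTop (𝓝 (∫ y, φ y ∂μ)) := by
  have hφint : Integrable φ μ := by
    refine (integrable_const (1:ℝ)).mono' hφm.aestronglyMeasurable ?_
    refine Eventually.of_forall fun x => ?_
    rw [Real.norm_eq_abs, abs_of_nonneg (hφ0 x)]
    exact hφ1 x
  have h1 := core_limsup_le hErg hφm hφ0 hφ1
  have h2 := core_limsup_le hErg (φ := fun x => 1 - φ x)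
    (measurable_const.sub hφm) (fun x => by show (0:ℝ) ≤ 1 - φ x; linarith [hφ1 x])
    (fun x => by show 1 - φ x ≤ 1; linarith [hφ0 x])
  have hint2 : ∫ y, (1 - φ y) ∂μ = 1 - ∫ y, φ y ∂μ := by
    rw [integral_sub (integrable_const 1) hφint, integral_const]
    simp
  rw [hint2] at h2
  filter_upwards [h1, h2] with x hx1 hx2
  have hsub : ∀ n : ℕ, birkhoffSum T (fun y => 1 - φ y) n x
      = (n : ℝ) - birkhoffSum T φ n x := by
    intro n
    rw [birkhoffSum, birkhoffSum, Finset.sum_sub_distrib]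
    simp
  rw [tendsto_order]
  constructor
  · intro a ha
    have hlt : limsup (fun n => birkhoffSum T (fun y => 1 - φ y) n x / n) atTop < 1 - a :=
      lt_of_le_of_lt hx2 (by linarith)
    have hev := eventually_lt_of_limsup_lt hlt (by
      refine isBoundedUnder_of ⟨1, fun n => ?_⟩
      rcases Nat.eq_zero_or_pos n with rfl | hn
      · simp
      · have hnpos : (0:ℝ) < n := by exact_mod_cast hn
        rw [div_le_one hnpos, hsub n]
        have : 0 ≤ birkhoffSum T φ n x := Finset.sum_nonneg fun i _ => hφ0 _
        linarith)
    filter_upwards [hev, eventually_ge_atTop 1] with n hn hn1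
    have hnpos : (0:ℝ) < n := by exact_mod_cast hn1
    rw [hsub n] at hn
    have heq : ((n:ℝ) - birkhoffSum T φ n x) / n = 1 - birkhoffSum T φ n x / n := by
      field_simp
    rw [heq] at hn
    linarith
  · intro b hb
    refine eventually_lt_of_limsup_lt (lt_of_le_of_lt hx1 hb) ?_
    refine isBoundedUnder_of ⟨1, fun n => ?_⟩
    rcases Nat.eq_zero_or_pos n with rfl | hn
    · simp
    · have hnpos : (0:ℝ) < n := by exact_mod_cast hn
      rw [div_le_one hnpos]
      calc birkhoffSum T φ n x ≤ ∑ _i ∈ Finset.range n, (1:ℝ) :=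
            Finset.sum_le_sum fun i _ => hφ1 _
        _ = n := by simp

/-- **Lemma 2.9.** Let `μ` be an ergodic invariant measure of the homeomorphism `f` of a compact
metric space and `Δ` a measurable set with `μ(Δ) > 0`. For `ρ > 0` and `s ∈ ℕ`, let
`Δ_{s,ρ} = {x ∈ Δ | ∀ l ≥ s, ∃ m ∈ [l,(1+ρ)l], f^m(x) ∈ Δ}`. Then
`μ(Δ_{s,ρ}) → μ(Δ)` as `s → ∞`. -/
theorem recurrence_in_proportional_window
    {X : Type*} [MetricSpace X] [CompactSpace X] [MeasurableSpace X] [BorelSpace X]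
    (f : X ≃ₜ X) (μ : Measure X) [IsProbabilityMeasure μ] (hErg : Ergodic (⇑f) μ)
    (Δ : Set X) (hΔm : MeasurableSet Δ) (hΔ : 0 < μ Δ)
    (ρ : ℝ) (hρ : 0 < ρ) :
    Tendsto
      (fun s : ℕ => μ {x ∈ Δ | ∀ l ≥ s, ∃ m : ℕ, l ≤ m ∧ (m : ℝ) ≤ (1 + ρ) * (l : ℝ) ∧
        (⇑f)^[m] x ∈ Δ})
      atTop (𝓝 (μ Δ)) := by
  set T : X → X := ⇑f with hT
  have hTm : Measurable T := f.continuous.measurable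
  set φ : X → ℝ := Δ.indicator (fun _ => (1:ℝ)) with hφ
  have hφm : Measurable φ := measurable_const.indicator hΔm
  have hφ0 : ∀ x, 0 ≤ φ x := fun x => Set.indicator_nonneg (fun _ _ => zero_le_one) x
  have hφ1 : ∀ x, φ x ≤ 1 := by
    intro x
    by_cases hx : x ∈ Δ
    · rw [hφ, Set.indicator_of_mem hx]
    · rw [hφ, Set.indicator_of_notMem hx]; exact zero_le_one
  set c : ℝ := (μ Δ).toReal with hc
  have hcint : ∫ y, φ y ∂μ = c := by
    rw [hφ, integral_indicator_const (1:ℝ) hΔm]; simp [hc]; rfl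
  have hcpos : 0 < c := ENNReal.toReal_pos hΔ.ne' (measure_ne_top μ Δ)
  have hB := birkhoff_aux hErg hφm hφ0 hφ1
  rw [hcint] at hB
  -- Step 2: pointwise window property for Birkhoff-typical points
  have hQ : ∀ x : X, Tendsto (fun n => birkhoffSum T φ n x / n) atTop (𝓝 c) →
      ∃ s : ℕ, ∀ l ≥ s, ∃ m : ℕ, l ≤ m ∧ (m : ℝ) ≤ (1 + ρ) * (l : ℝ) ∧ T^[m] x ∈ Δ := by
    intro x hx
    set δ : ℝ := c * ρ / (2 + ρ) with hδ
    have h2ρ : (0:ℝ) < 2 + ρ := by linarith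
    have hδpos : 0 < δ := by
      apply div_pos (by positivity) h2ρ
    have hδc : δ < c := by
      rw [hδ, div_lt_iff₀ h2ρ]
      nlinarith
    have hδeq : (c - δ) * (1 + ρ) = c + δ := by
      rw [hδ]
      field_simp
      ring
    have hev : ∀ᶠ n in atTop, |birkhoffSum T φ n x / n - c| < δ := by
      have := hx (Metric.ball_mem_nhds c hδpos)
      simpa [Real.dist_eq] using this
    obtain ⟨N, hN⟩ := eventually_atTop.1 hev
    refine ⟨max N 1, fun l hl => ?_⟩
    by_contra hcon
    push_neg at hcon
    have hl1 : 1 ≤ l := le_trans (le_max_right N 1) hl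
    have hlN : N ≤ l := le_trans (le_max_left N 1) hl
    have hlpos : (0:ℝ) < l := by exact_mod_cast hl1
    set Ml : ℕ := ⌊(1 + ρ) * (l:ℝ)⌋₊ with hMl
    have hposl : (0:ℝ) ≤ (1 + ρ) * l := by positivity
    have hlMl : l ≤ Ml := by
      rw [hMl]
      apply Nat.le_floor
      nlinarith
    have hfl : (Ml:ℝ) ≤ (1 + ρ) * l := Nat.floor_le hposl
    have hflu : (1 + ρ) * (l:ℝ) < Ml + 1 := Nat.lt_floor_add_one _
    have hzero : ∀ i : ℕ, l ≤ i → i ≤ Ml → φ (T^[i] x) = 0 := by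
      intro i h1 h2
      have hnot : T^[i] x ∉ Δ := by
        intro hmem
        exact absurd hmem (hcon i h1 (le_trans (by exact_mod_cast h2) hfl))
      rw [hφ, Set.indicator_of_notMem hnot]
    have hSeq : birkhoffSum T φ (Ml + 1) x = birkhoffSum T φ l x := by
      obtain ⟨k, hk⟩ : ∃ k, Ml + 1 = l + k := ⟨Ml + 1 - l, by omega⟩
      rw [hk, birkhoffSum_add]
      have : birkhoffSum T φ k (T^[l] x) = 0 := by
        apply Finset.sum_eq_zero
        intro j hj
        rw [Finset.mem_range] at hj
        rw [← Function.iterate_add_apply]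
        exact hzero (j + l) (by omega) (by omega)
      rw [this, add_zero]
    set a : ℝ := birkhoffSum T φ l x with ha
    have h1 : |a / l - c| < δ := hN l hlN
    have h2 : |a / (Ml + 1) - c| < δ := by
      have := hN (Ml + 1) (by omega)
      rw [hSeq] at this
      convert this using 3
      push_cast
      ring
    rw [abs_lt] at h1 h2
    have hMpos : (0:ℝ) < (Ml:ℝ) + 1 := by positivity
    have hup : a < (c + δ) * l := by
      have hthis : a / l < c + δ := by linarith [h1.2]
      calc a = (a / l) * l := by field_simp
        _ < (c + δ) * l := mul_lt_mul_of_pos_right hthis hlpos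
    have hdown : (c - δ) * ((Ml:ℝ) + 1) < a := by
      have h' : c - δ < a / ((Ml:ℝ) + 1) := by linarith [h2.1]
      calc (c - δ) * ((Ml:ℝ) + 1) < (a / ((Ml:ℝ) + 1)) * ((Ml:ℝ) + 1) :=
            mul_lt_mul_of_pos_right h' hMpos
        _ = a := by field_simp
    have hchain : (c + δ) * l < (c + δ) * l := by
      calc (c + δ) * l = (c - δ) * (1 + ρ) * l := by rw [hδeq]
        _ ≤ (c - δ) * ((Ml:ℝ) + 1) := by
            have hcd : 0 ≤ c - δ := by linarith
            have : (1 + ρ) * (l:ℝ) ≤ (Ml:ℝ) + 1 := le_of_lt hflu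
            calc (c - δ) * (1 + ρ) * l = (c - δ) * ((1 + ρ) * l) := by ring
              _ ≤ (c - δ) * ((Ml:ℝ) + 1) := mul_le_mul_of_nonneg_left this hcd
        _ < a := hdown
        _ < (c + δ) * l := hup
    exact lt_irrefl _ hchain
  -- Step 3: monotone convergence of the sets
  set Es : ℕ → Set X := fun s => {x ∈ Δ | ∀ l ≥ s, ∃ m : ℕ, l ≤ m ∧ (m : ℝ) ≤ (1 + ρ) * (l : ℝ) ∧
    T^[m] x ∈ Δ} with hEs
  have hEmono : Monotone Es := by
    intro s s' hss' x hx
    exact ⟨hx.1, fun l hl => hx.2 l (le_trans hss' hl)⟩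
  have hEmeas : ∀ s, MeasurableSet (Es s) := by
    intro s
    have : Es s = Δ ∩ ⋂ (l : ℕ) (_ : s ≤ l),
        ⋃ (m : ℕ) (_ : l ≤ m ∧ (m : ℝ) ≤ (1 + ρ) * (l : ℝ)), T^[m] ⁻¹' Δ := by
      ext x
      simp only [hEs, Set.mem_setOf_eq, Set.mem_inter_iff, Set.mem_iInter, Set.mem_iUnion,
        Set.mem_preimage, ge_iff_le, exists_prop]
      constructor
      · rintro ⟨h1, h2⟩
        refine ⟨h1, fun l hl => ?_⟩
        obtain ⟨m, hm1, hm2, hm3⟩ := h2 l hl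
        exact ⟨m, ⟨hm1, hm2⟩, hm3⟩
      · rintro ⟨h1, h2⟩
        refine ⟨h1, fun l hl => ?_⟩
        obtain ⟨m, ⟨hm1, hm2⟩, hm3⟩ := h2 l hl
        exact ⟨m, hm1, hm2, hm3⟩
    rw [this]
    exact hΔm.inter (MeasurableSet.iInter fun l => MeasurableSet.iInter fun _ =>
      MeasurableSet.iUnion fun m => MeasurableSet.iUnion fun _ => (hTm.iterate m) hΔm)
  have htendE : Tendsto (fun s => μ (Es s)) atTop (𝓝 (μ (⋃ s, Es s))) :=
    tendsto_measure_iUnion_atTop hEmono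
  have hunion : μ (⋃ s, Es s) = μ Δ := by
    apply le_antisymm
    · exact measure_mono (Set.iUnion_subset fun s x hx => hx.1)
    · apply measure_mono_ae
      filter_upwards [hB] with x hx hxΔ
      obtain ⟨s, hs⟩ := hQ x hx
      exact Set.mem_iUnion.2 ⟨s, hxΔ, hs⟩
  rw [hunion] at htendE
  exact htendE
end

section
/- Let (X,d) be a compact metric space, f: X → X a homeomorphism with the entropy-dense property, and A: X → GL(m,ℝ) a continuous matrix function. If there exist two ergodic f-invariant measures with different maximal Lyapunov exponents with respect to A, then sup{ h_μ(f) : μ ergodic, χ_max(A,μ) > inf_{ν invariant} χ_max(A,ν) } = sup{ min{h_μ(f), h_ν(f)} : μ, ν ergodic with χ_max(A,μ) > χ_max(A,ν) }. -/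
open Filter MeasureTheory Set Topology Manifold
open scoped ENNReal NNReal

section MetricEntropy

variable {X : Type*} [MeasurableSpace X]

/-- Entropy `H_μ(⋁_{i=0}^{n-1} f^{-i} ξ)` of the `n`-th dynamical refinement of the finite
measurable partition `ξ = {P⁻¹(c)}_{c}`. -/
noncomputable def partHn (f : X → X) (μ : MeasureTheory.Measure X) {k : ℕ}
    (P : X → Fin k) (n : ℕ) : ℝ :=
  ∑ c : Fin n → Fin k,
    Real.negMulLog (μ {x | ∀ i : Fin n, P (f^[(i : ℕ)] x) = c i}).toReal

/-- Kolmogorov–Sinai metric entropy `h_μ(f)`: the supremum over finite measurable partitions of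
`lim_n (1/n) H_μ(⋁_{i<n} f^{-i} ξ) = inf_{n ≥ 1} (1/n) H_μ(⋁_{i<n} f^{-i} ξ)`. -/
noncomputable def ksEnt (f : X → X) (μ : MeasureTheory.Measure X) : EReal :=
  ⨆ (k : ℕ) (P : X → Fin k) (_ : Measurable P),
    (((⨅ n : ℕ, partHn f μ P (n + 1) / ((n : ℝ) + 1)) : ℝ) : EReal)

end MetricEntropy

section CocycleDefs

/-- Euclidean space `ℝ^m`. -/
abbrev Em (m : ℕ) := EuclideanSpace ℝ (Fin m)

variable {X : Type*} {m : ℕ}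

/-- The cocycle generated by the `GL(m,ℝ)`-valued function `A` over `f`:
`A(x,n) = A(f^{n-1}x) ⋯ A(f x) A(x)`. -/
noncomputable def cocycle (f : X → X) (A : X → (Em m ≃L[ℝ] Em m)) (x : X) :
    ℕ → (Em m →L[ℝ] Em m)
  | 0 => ContinuousLinearMap.id ℝ (Em m)
  | n + 1 => ((A (f^[n] x) : Em m →L[ℝ] Em m)).comp (cocycle f A x n)

/-- `A` is an `α`-Hölder continuous matrix function for some exponent `α > 0`
(in the operator norm). -/
def HolderMat [MetricSpace X] (A : X → (Em m ≃L[ℝ] Em m)) : Prop :=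
  ∃ α C : ℝ, 0 < α ∧ 0 ≤ C ∧ ∀ x y : X,
    ‖((A x : Em m →L[ℝ] Em m)) - ((A y : Em m →L[ℝ] Em m))‖ ≤ C * dist x y ^ α

/-- The set `MLI(A,f)` of Max-Lyapunov-irregular points: points where
`lim_n (1/n) log ‖A(x,n)‖` does not exist. -/
def MLIrr (f : X → X) (A : X → (Em m ≃L[ℝ] Em m)) : Set X :=
  {x | ¬ ∃ c : ℝ,
    Filter.Tendsto (fun n : ℕ => Real.log ‖cocycle f A x n‖ / n) Filter.atTop (nhds c)}

/-- The maximal Lyapunov exponent of an invariant measure: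
`χ_max(A,μ) = lim_n (1/n) ∫ log ‖A(x,n)‖ dμ = inf_{n ≥ 1} (1/n) ∫ log ‖A(x,n)‖ dμ`. -/
noncomputable def mle [MeasurableSpace X] (f : X → X) (A : X → (Em m ≃L[ℝ] Em m))
    (μ : MeasureTheory.Measure X) : ℝ :=
  ⨅ n : ℕ, (∫ x, Real.log ‖cocycle f A x (n + 1)‖ ∂μ) / ((n : ℝ) + 1)

/-- `μ` is a Lyapunov-minimizing (ergodic) measure for the cocycle `A`:
`χ_max(A,μ) = inf {χ_max(A,ν) : ν an f-invariant Borel probability measure}`. -/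
def IsLyapMin [MeasurableSpace X] (f : X → X) (A : X → (Em m ≃L[ℝ] Em m))
    (μ : MeasureTheory.Measure X) : Prop :=
  mle f A μ = sInf {r : ℝ | ∃ ν : MeasureTheory.Measure X,
    MeasureTheory.IsProbabilityMeasure ν ∧ MeasureTheory.MeasurePreserving f ν ν ∧
    r = mle f A ν}

end CocycleDefs

set_option linter.unusedSectionVars false

section Aux

variable {X : Type*} {m : ℕ}

/-- Invertible version of the cocycle. -/
noncomputable def ecocycle (f : X → X) (A : X → (Em m ≃L[ℝ] Em m)) (x : X) :
    ℕ → (Em m ≃L[ℝ] Em m)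
  | 0 => ContinuousLinearEquiv.refl ℝ (Em m)
  | n + 1 => (ecocycle f A x n).trans (A (f^[n] x))

lemma ecocycle_coe (f : X → X) (A : X → (Em m ≃L[ℝ] Em m)) (x : X) (n : ℕ) :
    ((ecocycle f A x n : Em m ≃L[ℝ] Em m) : Em m →L[ℝ] Em m) = cocycle f A x n := by
  induction n with
  | zero => rfl
  | succ n ih =>
    ext v
    simp only [ecocycle, cocycle, ContinuousLinearEquiv.coe_coe,
      ContinuousLinearEquiv.trans_apply, ContinuousLinearMap.coe_comp', Function.comp_apply, ← ih]

lemma em_nontrivial (hm : m ≠ 0) : Nontrivial (Em m) := by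
  have i : Fin m := ⟨0, Nat.pos_of_ne_zero hm⟩
  refine ⟨EuclideanSpace.single i 1, 0, fun h => ?_⟩
  have h2 := congrArg (fun v : Em m => v i) h
  simp [EuclideanSpace.single_apply] at h2

lemma mle_of_m_eq_zero {X : Type*} [MeasurableSpace X] (g : X → X)
    (A : X → (Em 0 ≃L[ℝ] Em 0)) (ρ : MeasureTheory.Measure X) : mle g A ρ = 0 := by
  haveI : Subsingleton (Em 0) := ⟨fun a b => PiLp.ext (fun i => Fin.elim0 i)⟩
  have h : ∀ x n, Real.log ‖cocycle g A x n‖ = 0 := by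
    intro x n
    have : cocycle g A x n = 0 := Subsingleton.elim _ _
    rw [this, norm_zero, Real.log_zero]
  unfold mle
  simp only [h, MeasureTheory.integral_zero, zero_div]
  exact ciInf_const
variable [MetricSpace X] [CompactSpace X] [MeasurableSpace X] [BorelSpace X]
variable (f : X ≃ₜ X) (A : X → (Em m ≃L[ℝ] Em m))

lemma cocycle_add (x : X) (p q : ℕ) :
    cocycle (⇑f) A x (p + q) = (cocycle (⇑f) A ((⇑f)^[p] x) q).comp (cocycle (⇑f) A x p) := by
  induction q with
  | zero => simp [cocycle]
  | succ q ih =>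
    have h1 : p + (q + 1) = (p + q) + 1 := rfl
    have h2 : (⇑f)^[p + q] x = (⇑f)^[q] ((⇑f)^[p] x) := by
      rw [add_comm]; exact Function.iterate_add_apply _ _ _ _
    rw [h1]
    show (A ((⇑f)^[p+q] x) : Em m →L[ℝ] Em m).comp (cocycle (⇑f) A x (p + q)) = _
    rw [ih, h2]
    show _ = ((A ((⇑f)^[q] ((⇑f)^[p] x)) : Em m →L[ℝ] Em m).comp
      (cocycle (⇑f) A ((⇑f)^[p] x) q)).comp (cocycle (⇑f) A x p)
    rw [ContinuousLinearMap.comp_assoc]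

lemma one_le_norm_mul (hm : m ≠ 0) (x : X) (n : ℕ) :
    (1:ℝ) ≤ ‖(((ecocycle (⇑f) A x n).symm : Em m →L[ℝ] Em m))‖ * ‖cocycle (⇑f) A x n‖ := by
  haveI := em_nontrivial hm
  calc (1:ℝ) = ‖ContinuousLinearMap.id ℝ (Em m)‖ := (ContinuousLinearMap.norm_id).symm
    _ = ‖((ecocycle (⇑f) A x n).symm : Em m →L[ℝ] Em m).comp (cocycle (⇑f) A x n)‖ := by
        rw [← ecocycle_coe]
        congr 1
        ext v
        simp
    _ ≤ _ := ContinuousLinearMap.opNorm_comp_le _ _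

lemma norm_cocycle_pos (hm : m ≠ 0) (x : X) (n : ℕ) : 0 < ‖cocycle (⇑f) A x n‖ := by
  rcases lt_or_eq_of_le (norm_nonneg (cocycle (⇑f) A x n)) with h | h
  · exact h
  · exfalso
    have h1 := one_le_norm_mul f A hm x n
    rw [← h, mul_zero] at h1
    linarith

lemma symm_norm_le {M : ℝ} (hM1 : 1 ≤ M)
    (hM : ∀ x : X, ‖(((A x).symm : Em m →L[ℝ] Em m))‖ ≤ M) (x : X) (n : ℕ) :
    ‖(((ecocycle (⇑f) A x n).symm : Em m →L[ℝ] Em m))‖ ≤ M ^ n := by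
  have hM0 : (0:ℝ) ≤ M := le_trans zero_le_one hM1
  induction n with
  | zero =>
    have h : (((ecocycle (⇑f) A x 0).symm : Em m →L[ℝ] Em m)) =
        ContinuousLinearMap.id ℝ (Em m) := by
      ext v; simp [ecocycle]
    rw [h, pow_zero]
    exact ContinuousLinearMap.norm_id_le
  | succ n ih =>
    have hcoe : (((ecocycle (⇑f) A x (n+1)).symm : Em m →L[ℝ] Em m)) =
        ((ecocycle (⇑f) A x n).symm : Em m →L[ℝ] Em m).comp
          (((A ((⇑f)^[n] x)).symm : Em m →L[ℝ] Em m)) := by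
      ext v
      simp [ecocycle]
    rw [hcoe, pow_succ]
    calc ‖_‖ ≤ _ := ContinuousLinearMap.opNorm_comp_le _ _
      _ ≤ M ^ n * M := by
          apply mul_le_mul ih (hM _) (norm_nonneg _) (pow_nonneg hM0 n)

lemma log_norm_cocycle_ge (hm : m ≠ 0) {M : ℝ} (hM1 : 1 ≤ M)
    (hM : ∀ x : X, ‖(((A x).symm : Em m →L[ℝ] Em m))‖ ≤ M) (x : X) (n : ℕ) :
    -((n:ℝ) * Real.log M) ≤ Real.log ‖cocycle (⇑f) A x n‖ := by
  have hMpos : (0:ℝ) < M := lt_of_lt_of_le one_pos hM1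
  have hpow : (0:ℝ) < M ^ n := pow_pos hMpos n
  have h1 := one_le_norm_mul f A hm x n
  have h2 := symm_norm_le f A hM1 hM x n
  have h3 : (1:ℝ) ≤ M ^ n * ‖cocycle (⇑f) A x n‖ :=
    le_trans h1 (mul_le_mul_of_nonneg_right h2 (norm_nonneg _))
  have hge : (M ^ n)⁻¹ ≤ ‖cocycle (⇑f) A x n‖ := by
    have h4 : (M ^ n)⁻¹ * 1 ≤ (M ^ n)⁻¹ * (M ^ n * ‖cocycle (⇑f) A x n‖) :=
      mul_le_mul_of_nonneg_left h3 (inv_nonneg.mpr hpow.le)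
    rwa [mul_one, ← mul_assoc, inv_mul_cancel₀ hpow.ne', one_mul] at h4
  calc -((n:ℝ) * Real.log M) = Real.log ((M ^ n)⁻¹) := by
        rw [Real.log_inv, Real.log_pow]
    _ ≤ _ := Real.log_le_log (inv_pos.mpr hpow) hge

lemma cocycle_cont (hA : Continuous fun x => ((A x : Em m →L[ℝ] Em m))) (n : ℕ) :
    Continuous fun x : X => cocycle (⇑f) A x n := by
  induction n with
  | zero => exact continuous_const
  | succ n ih => exact Continuous.clm_comp (hA.comp (f.continuous.iterate n)) ih

lemma log_norm_cont (hm : m ≠ 0) (hA : Continuous fun x => ((A x : Em m →L[ℝ] Em m))) (n : ℕ) :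
    Continuous fun x : X => Real.log ‖cocycle (⇑f) A x n‖ :=
  ((cocycle_cont f A hA n).norm).log fun x => (norm_cocycle_pos f A hm x n).ne'

lemma cont_integrable {g : X → ℝ} (hg : Continuous g) (ρ : MeasureTheory.Measure X)
    [MeasureTheory.IsFiniteMeasure ρ] : MeasureTheory.Integrable g ρ :=
  hg.integrable_of_hasCompactSupport ((isClosed_tsupport g).isCompact)
/-- The integral sequence `n ↦ ∫ log ‖A(x,n)‖ dρ`. -/
noncomputable def bseq (f : X ≃ₜ X) (A : X → (Em m ≃L[ℝ] Em m))
    (ρ : MeasureTheory.Measure X) (n : ℕ) : ℝ :=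
  ∫ x, Real.log ‖cocycle (⇑f) A x n‖ ∂ρ

lemma mle_eq_iInf_bseq (ρ : MeasureTheory.Measure X) :
    mle (⇑f) A ρ = ⨅ n : ℕ, bseq f A ρ (n + 1) / ((n : ℝ) + 1) := rfl

lemma iterate_measurableEmbedding (p : ℕ) : MeasurableEmbedding ((⇑f)^[p]) := by
  induction p with
  | zero => simpa using MeasurableEmbedding.id
  | succ p ih =>
    rw [Function.iterate_succ]
    exact ih.comp f.measurableEmbedding

lemma bseq_subadd (hm : m ≠ 0) (hA : Continuous fun x => ((A x : Em m →L[ℝ] Em m)))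
    (ρ : MeasureTheory.Measure X) [MeasureTheory.IsProbabilityMeasure ρ]
    (hρ : MeasureTheory.MeasurePreserving (⇑f) ρ ρ) : Subadditive (bseq f A ρ) := by
  intro p q
  have key : ∀ x, Real.log ‖cocycle (⇑f) A x (p + q)‖ ≤
      Real.log ‖cocycle (⇑f) A ((⇑f)^[p] x) q‖ + Real.log ‖cocycle (⇑f) A x p‖ := by
    intro x
    rw [cocycle_add]
    calc Real.log ‖(cocycle (⇑f) A ((⇑f)^[p] x) q).comp (cocycle (⇑f) A x p)‖
        ≤ Real.log (‖cocycle (⇑f) A ((⇑f)^[p] x) q‖ * ‖cocycle (⇑f) A x p‖) := by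
          apply Real.log_le_log
          · rw [← cocycle_add]; exact norm_cocycle_pos f A hm x (p + q)
          · exact ContinuousLinearMap.opNorm_comp_le _ _
      _ = _ := Real.log_mul (norm_cocycle_pos f A hm _ q).ne' (norm_cocycle_pos f A hm x p).ne'
  have int1 : MeasureTheory.Integrable
      (fun x => Real.log ‖cocycle (⇑f) A ((⇑f)^[p] x) q‖) ρ :=
    cont_integrable ((log_norm_cont f A hm hA q).comp (f.continuous.iterate p)) ρ
  have int2 : MeasureTheory.Integrable (fun x => Real.log ‖cocycle (⇑f) A x p‖) ρ :=
    cont_integrable (log_norm_cont f A hm hA p) ρ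
  calc bseq f A ρ (p + q)
      ≤ ∫ x, (Real.log ‖cocycle (⇑f) A ((⇑f)^[p] x) q‖
          + Real.log ‖cocycle (⇑f) A x p‖) ∂ρ :=
        MeasureTheory.integral_mono (cont_integrable (log_norm_cont f A hm hA (p + q)) ρ)
          (int1.add int2) key
    _ = (∫ x, Real.log ‖cocycle (⇑f) A ((⇑f)^[p] x) q‖ ∂ρ) + bseq f A ρ p :=
        MeasureTheory.integral_add int1 int2
    _ = bseq f A ρ q + bseq f A ρ p := by
        congr 1
        exact (hρ.iterate p).integral_comp (iterate_measurableEmbedding f p)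
          (fun y => Real.log ‖cocycle (⇑f) A y q‖)
    _ = bseq f A ρ p + bseq f A ρ q := add_comm _ _

lemma bseq_zero (hm : m ≠ 0) (ρ : MeasureTheory.Measure X)
    [MeasureTheory.IsProbabilityMeasure ρ] : bseq f A ρ 0 = 0 := by
  haveI := em_nontrivial hm
  have : ∀ x : X, Real.log ‖cocycle (⇑f) A x 0‖ = 0 := by
    intro x
    show Real.log ‖ContinuousLinearMap.id ℝ (Em m)‖ = 0
    rw [ContinuousLinearMap.norm_id, Real.log_one]
  unfold bseq
  simp [this]

lemma bseq_ge (hm : m ≠ 0) (hA : Continuous fun x => ((A x : Em m →L[ℝ] Em m)))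
    {M : ℝ} (hM1 : 1 ≤ M) (hM : ∀ x : X, ‖(((A x).symm : Em m →L[ℝ] Em m))‖ ≤ M)
    (ρ : MeasureTheory.Measure X) [MeasureTheory.IsProbabilityMeasure ρ] (n : ℕ) :
    -((n:ℝ) * Real.log M) ≤ bseq f A ρ n := by
  have h : ∫ _x, -((n:ℝ) * Real.log M) ∂ρ ≤ bseq f A ρ n :=
    MeasureTheory.integral_mono (MeasureTheory.integrable_const _)
      (cont_integrable (log_norm_cont f A hm hA n) ρ)
      (fun x => log_norm_cocycle_ge f A hm hM1 hM x n)
  simpa using h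

lemma bseq_div_ge (hm : m ≠ 0) (hA : Continuous fun x => ((A x : Em m →L[ℝ] Em m)))
    {M : ℝ} (hM1 : 1 ≤ M) (hM : ∀ x : X, ‖(((A x).symm : Em m →L[ℝ] Em m))‖ ≤ M)
    (ρ : MeasureTheory.Measure X) [MeasureTheory.IsProbabilityMeasure ρ] (n : ℕ) :
    -Real.log M ≤ bseq f A ρ n / n := by
  rcases Nat.eq_zero_or_pos n with rfl | hn
  · rw [bseq_zero f A hm ρ]
    simp [neg_nonpos, Real.log_nonneg hM1]
  · have hn' : (0:ℝ) < n := by exact_mod_cast hn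
    rw [le_div_iff₀ hn']
    have := bseq_ge f A hm hA hM1 hM ρ n
    nlinarith [this]

lemma mle_ge (hm : m ≠ 0) (hA : Continuous fun x => ((A x : Em m →L[ℝ] Em m)))
    {M : ℝ} (hM1 : 1 ≤ M) (hM : ∀ x : X, ‖(((A x).symm : Em m →L[ℝ] Em m))‖ ≤ M)
    (ρ : MeasureTheory.Measure X) [MeasureTheory.IsProbabilityMeasure ρ] :
    -Real.log M ≤ mle (⇑f) A ρ := by
  rw [mle_eq_iInf_bseq]
  apply le_ciInf
  intro n
  have := bseq_div_ge f A hm hA hM1 hM ρ (n + 1)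
  rwa [Nat.cast_add, Nat.cast_one] at this

lemma mle_terms_bddBelow (hm : m ≠ 0) (hA : Continuous fun x => ((A x : Em m →L[ℝ] Em m)))
    {M : ℝ} (hM1 : 1 ≤ M) (hM : ∀ x : X, ‖(((A x).symm : Em m →L[ℝ] Em m))‖ ≤ M)
    (ρ : MeasureTheory.Measure X) [MeasureTheory.IsProbabilityMeasure ρ] :
    BddBelow (Set.range fun n : ℕ => bseq f A ρ (n + 1) / ((n : ℝ) + 1)) := by
  refine ⟨-Real.log M, ?_⟩
  rintro r ⟨n, rfl⟩
  have := bseq_div_ge f A hm hA hM1 hM ρ (n + 1)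
  rwa [Nat.cast_add, Nat.cast_one] at this

/-- Fekete: the averages converge to the infimum, i.e. to `mle`. -/
lemma tendsto_bseq_div (hm : m ≠ 0) (hA : Continuous fun x => ((A x : Em m →L[ℝ] Em m)))
    {M : ℝ} (hM1 : 1 ≤ M) (hM : ∀ x : X, ‖(((A x).symm : Em m →L[ℝ] Em m))‖ ≤ M)
    (ρ : MeasureTheory.Measure X) [MeasureTheory.IsProbabilityMeasure ρ]
    (hρ : MeasureTheory.MeasurePreserving (⇑f) ρ ρ) :
    Filter.Tendsto (fun n : ℕ => bseq f A ρ n / n) Filter.atTop (nhds (mle (⇑f) A ρ)) := by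
  have hsub := bseq_subadd f A hm hA ρ hρ
  have hbdd : BddBelow (Set.range fun n : ℕ => bseq f A ρ n / n) := by
    refine ⟨-Real.log M, ?_⟩
    rintro r ⟨n, rfl⟩
    exact bseq_div_ge f A hm hA hM1 hM ρ n
  have hlim : hsub.lim = mle (⇑f) A ρ := by
    rw [Subadditive.lim]
    have himg : (fun n : ℕ => bseq f A ρ n / n) '' Set.Ici 1 =
        Set.range (fun n : ℕ => bseq f A ρ (n + 1) / ((n : ℝ) + 1)) := by
      ext r
      constructor
      · rintro ⟨n, hn, rfl⟩
        obtain ⟨k, rfl⟩ := Nat.exists_eq_add_of_le hn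
        exact ⟨k, by push_cast; ring_nf⟩
      · rintro ⟨k, rfl⟩
        refine ⟨k + 1, by simp, by push_cast; ring_nf⟩
    rw [himg, mle_eq_iInf_bseq, iInf]
  rw [← hlim]
  exact hsub.tendsto_lim hbdd

lemma bseq_combo (hm : m ≠ 0) (hA : Continuous fun x => ((A x : Em m →L[ℝ] Em m)))
    (ν μ : MeasureTheory.Measure X) [MeasureTheory.IsProbabilityMeasure ν]
    [MeasureTheory.IsProbabilityMeasure μ] {ε : ℝ} (hε0 : 0 ≤ ε) (hε1 : ε ≤ 1) (n : ℕ) :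
    bseq f A (ENNReal.ofReal ε • ν + ENNReal.ofReal (1 - ε) • μ) n
      = ε * bseq f A ν n + (1 - ε) * bseq f A μ n := by
  haveI h1 : MeasureTheory.IsFiniteMeasure (ENNReal.ofReal ε • ν : MeasureTheory.Measure X) := by
    constructor
    rw [MeasureTheory.Measure.smul_apply, smul_eq_mul]
    exact ENNReal.mul_lt_top ENNReal.ofReal_lt_top (MeasureTheory.measure_lt_top ν _)
  haveI h2 : MeasureTheory.IsFiniteMeasure
      (ENNReal.ofReal (1 - ε) • μ : MeasureTheory.Measure X) := by
    constructor
    rw [MeasureTheory.Measure.smul_apply, smul_eq_mul]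
    exact ENNReal.mul_lt_top ENNReal.ofReal_lt_top (MeasureTheory.measure_lt_top μ _)
  unfold bseq
  rw [MeasureTheory.integral_add_measure
      (cont_integrable (log_norm_cont f A hm hA n) _)
      (cont_integrable (log_norm_cont f A hm hA n) _),
    MeasureTheory.integral_smul_measure, MeasureTheory.integral_smul_measure,
    ENNReal.toReal_ofReal hε0, ENNReal.toReal_ofReal (by linarith : (0:ℝ) ≤ 1 - ε)]
  simp only [smul_eq_mul]
end Aux

section EntAux

variable {X : Type*} [MeasurableSpace X]

lemma partHn_nonneg (g : X → X) (ρ : MeasureTheory.Measure X)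
    [MeasureTheory.IsProbabilityMeasure ρ] {k : ℕ} (P : X → Fin k) (n : ℕ) :
    0 ≤ partHn g ρ P n := by
  apply Finset.sum_nonneg
  intro c _
  apply Real.negMulLog_nonneg ENNReal.toReal_nonneg
  have h1 : ρ {x | ∀ i : Fin n, P (g^[(i : ℕ)] x) = c i} ≤ 1 := prob_le_one
  calc (ρ _).toReal ≤ (1 : ℝ≥0∞).toReal := ENNReal.toReal_mono ENNReal.one_ne_top h1
    _ = 1 := by simp

lemma infH_nonneg (g : X → X) (ρ : MeasureTheory.Measure X)
    [MeasureTheory.IsProbabilityMeasure ρ] {k : ℕ} (P : X → Fin k) :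
    0 ≤ ⨅ n : ℕ, partHn g ρ P (n + 1) / ((n : ℝ) + 1) := by
  apply le_ciInf
  intro n
  apply div_nonneg (partHn_nonneg g ρ P (n + 1))
  positivity

lemma infH_bddBelow (g : X → X) (ρ : MeasureTheory.Measure X)
    [MeasureTheory.IsProbabilityMeasure ρ] {k : ℕ} (P : X → Fin k) :
    BddBelow (Set.range fun n : ℕ => partHn g ρ P (n + 1) / ((n : ℝ) + 1)) := by
  refine ⟨0, ?_⟩
  rintro r ⟨n, rfl⟩
  exact div_nonneg (partHn_nonneg g ρ P (n + 1)) (by positivity)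

lemma partHn_combo_ge (g : X → X) (ν μ : MeasureTheory.Measure X)
    [MeasureTheory.IsProbabilityMeasure ν] [MeasureTheory.IsProbabilityMeasure μ]
    {ε : ℝ} (hε0 : 0 ≤ ε) (hε1 : ε ≤ 1) {k : ℕ} (P : X → Fin k) (n : ℕ) :
    ε * partHn g ν P n + (1 - ε) * partHn g μ P n ≤
      partHn g (ENNReal.ofReal ε • ν + ENNReal.ofReal (1 - ε) • μ) P n := by
  unfold partHn
  rw [Finset.mul_sum, Finset.mul_sum, ← Finset.sum_add_distrib]
  apply Finset.sum_le_sum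
  intro c _
  set s := {x | ∀ i : Fin n, P (g^[(i : ℕ)] x) = c i} with hs
  have happ : (((ENNReal.ofReal ε • ν + ENNReal.ofReal (1 - ε) • μ) : MeasureTheory.Measure X)
      s).toReal = ε * (ν s).toReal + (1 - ε) * (μ s).toReal := by
    rw [MeasureTheory.Measure.add_apply, MeasureTheory.Measure.smul_apply,
      MeasureTheory.Measure.smul_apply, smul_eq_mul, smul_eq_mul,
      ENNReal.toReal_add (ENNReal.mul_ne_top ENNReal.ofReal_ne_top (MeasureTheory.measure_ne_top ν s))
        (ENNReal.mul_ne_top ENNReal.ofReal_ne_top (MeasureTheory.measure_ne_top μ s)),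
      ENNReal.toReal_mul, ENNReal.toReal_mul, ENNReal.toReal_ofReal hε0,
      ENNReal.toReal_ofReal (by linarith : (0:ℝ) ≤ 1 - ε)]
  rw [happ]
  have hcc := Real.concaveOn_negMulLog.2 (Set.mem_Ici.mpr (ENNReal.toReal_nonneg :
      (0:ℝ) ≤ (ν s).toReal)) (Set.mem_Ici.mpr (ENNReal.toReal_nonneg : (0:ℝ) ≤ (μ s).toReal))
    hε0 (by linarith : (0:ℝ) ≤ 1 - ε) (by ring)
  simpa [smul_eq_mul] using hcc

lemma ksEnt_ge_part (g : X → X) (ρ : MeasureTheory.Measure X) {k : ℕ} {P : X → Fin k}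
    (hP : Measurable P) :
    ((⨅ n : ℕ, partHn g ρ P (n + 1) / ((n : ℝ) + 1) : ℝ) : EReal) ≤ ksEnt g ρ := by
  unfold ksEnt
  refine le_iSup_of_le k ?_
  refine le_iSup_of_le P ?_
  exact le_iSup_of_le hP le_rfl

end EntAux

/-- `f` has the entropy-dense property: every invariant measure is a weak* limit of ergodic
measures with metric entropy approaching (from below) that of the given measure. -/
def EntropyDense {X : Type*} [MetricSpace X] [MeasurableSpace X] [OpensMeasurableSpace X]
    (f : X → X) : Prop :=
  ∀ ν : ProbabilityMeasure X, MeasurePreserving f (ν : Measure X) (ν : Measure X) →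
    ∀ G ∈ nhds ν, ∀ hstar : ℝ, (hstar : EReal) < ksEnt f (ν : Measure X) →
      ∃ μ : ProbabilityMeasure X, μ ∈ G ∧ Ergodic f (μ : Measure X) ∧
        (hstar : EReal) < ksEnt f (μ : Measure X)

/-- **Proposition 2.13 (2), first part.** Let `f` be a homeomorphism of a compact metric space
with the entropy-dense property and `A : X → GL(m,ℝ)` a continuous matrix function. If two
ergodic invariant measures have different maximal Lyapunov exponents w.r.t. `A`, then
`sup {h_μ(f) : μ ergodic, χ_max(A,μ) > inf_ν χ_max(A,ν)}
  = sup {min{h_μ(f), h_ν(f)} : μ, ν ergodic, χ_max(A,μ) > χ_max(A,ν)}`. -/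
theorem sup_entropy_not_minimizing_eq_sup_min_entropies
    {X : Type*} [MetricSpace X] [CompactSpace X] [MeasurableSpace X] [BorelSpace X] {m : ℕ}
    (f : X ≃ₜ X) (hdense : EntropyDense (⇑f))
    (A : X → (Em m ≃L[ℝ] Em m))
    (hA : Continuous fun x => ((A x : Em m →L[ℝ] Em m)))
    (hdiff : ∃ μ ν : Measure X, IsProbabilityMeasure μ ∧ IsProbabilityMeasure ν ∧
      Ergodic (⇑f) μ ∧ Ergodic (⇑f) ν ∧ mle (⇑f) A μ ≠ mle (⇑f) A ν) :
    sSup {h : EReal | ∃ μ : Measure X, IsProbabilityMeasure μ ∧ Ergodic (⇑f) μ ∧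
        sInf {r : ℝ | ∃ ν : Measure X, IsProbabilityMeasure ν ∧
          MeasurePreserving (⇑f) ν ν ∧ r = mle (⇑f) A ν} < mle (⇑f) A μ ∧
        h = ksEnt (⇑f) μ} =
    sSup {h : EReal | ∃ μ ν : Measure X, IsProbabilityMeasure μ ∧ IsProbabilityMeasure ν ∧
        Ergodic (⇑f) μ ∧ Ergodic (⇑f) ν ∧ mle (⇑f) A ν < mle (⇑f) A μ ∧
        h = min (ksEnt (⇑f) μ) (ksEnt (⇑f) ν)} := by
  classical
  by_cases hm : m = 0
  · exfalso
    subst hm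
    obtain ⟨μ, ν, _, _, _, _, hne⟩ := hdiff
    exact hne (by rw [mle_of_m_eq_zero, mle_of_m_eq_zero])
  · haveI hnt := em_nontrivial hm
    have hAsymm : Continuous fun x : X => (((A x).symm : Em m →L[ℝ] Em m)) := by
      have heq : ∀ x : X, (((A x).symm : Em m →L[ℝ] Em m)) =
          Ring.inverse ((A x : Em m →L[ℝ] Em m)) := by
        intro x
        rw [show ((A x : Em m →L[ℝ] Em m)) = ((A x).toUnit : Em m →L[ℝ] Em m) from rfl,
          Ring.inverse_unit]
        rfl
      simp only [heq]
      rw [continuous_iff_continuousAt]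
      intro x
      refine ContinuousAt.comp (g := Ring.inverse)
        (f := fun x : X => ((A x : Em m →L[ℝ] Em m))) ?_ hA.continuousAt
      exact NormedRing.inverse_continuousAt ((A x).toUnit)
    obtain ⟨C, hC⟩ : ∃ C : ℝ, ∀ x : X, ‖(((A x).symm : Em m →L[ℝ] Em m))‖ ≤ C := by
      obtain ⟨C, hC⟩ := (isCompact_range hAsymm.norm).bddAbove
      exact ⟨C, fun x => hC ⟨x, rfl⟩⟩
    set M : ℝ := max C 1 with hMdef
    have hM1 : 1 ≤ M := le_max_right _ _
    have hM : ∀ x : X, ‖(((A x).symm : Em m →L[ℝ] Em m))‖ ≤ M :=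
      fun x => (hC x).trans (le_max_left _ _)
    set Sinv : Set ℝ := {r : ℝ | ∃ ν : Measure X, IsProbabilityMeasure ν ∧
      MeasurePreserving (⇑f) ν ν ∧ r = mle (⇑f) A ν} with hSinvdef
    have hSbdd : BddBelow Sinv := by
      refine ⟨-Real.log M, ?_⟩
      rintro r ⟨ν, hp, hpres, rfl⟩
      haveI := hp
      exact mle_ge f A hm hA hM1 hM ν
    apply le_antisymm
    · apply sSup_le
      rintro h ⟨μ, hμp, hμerg, hμgt, rfl⟩
      haveI := hμp
      by_contra hcon
      push_neg at hcon
      obtain ⟨t, ht1, ht2⟩ := EReal.exists_between_coe_real hcon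
      have hmem_self : mle (⇑f) A μ ∈ Sinv := ⟨μ, hμp, hμerg.toMeasurePreserving, rfl⟩
      obtain ⟨r, hrS, hrlt⟩ := exists_lt_of_csInf_lt ⟨_, hmem_self⟩ hμgt
      obtain ⟨ν₀, hν₀p, hν₀pres, rfl⟩ := hrS
      haveI := hν₀p
      have ht2' : (t : EReal) < ksEnt (⇑f) μ := ht2
      rw [ksEnt, lt_iSup_iff] at ht2'
      obtain ⟨k, hk⟩ := ht2'
      rw [lt_iSup_iff] at hk
      obtain ⟨P, hP⟩ := hk
      rw [lt_iSup_iff] at hP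
      obtain ⟨hPm, hI⟩ := hP
      set I : ℝ := ⨅ n : ℕ, partHn (⇑f) μ P (n + 1) / ((n : ℝ) + 1) with hIdef
      have htI : t < I := by exact_mod_cast hI
      have hI0 : (0:ℝ) ≤ I := infH_nonneg (⇑f) μ P
      have hIt : (0:ℝ) < I - t := by linarith
      have hI1 : (0:ℝ) < I + 1 := by linarith
      set ε : ℝ := min (1/2) ((I - t) / (2 * (I + 1))) with hεdef
      have hε0 : 0 < ε := lt_min (by norm_num) (by positivity)
      have hεhalf : ε ≤ 1/2 := min_le_left _ _
      have hε1 : ε < 1 := lt_of_le_of_lt hεhalf (by norm_num)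
      have hε2 : ε * (I + 1) ≤ (I - t) / 2 := by
        have h5 : ε ≤ (I - t) / (2 * (I + 1)) := min_le_right _ _
        calc ε * (I + 1) ≤ ((I - t) / (2 * (I + 1))) * (I + 1) :=
              mul_le_mul_of_nonneg_right h5 (by linarith)
          _ = (I - t) / 2 := by field_simp
      set ω : Measure X := ENNReal.ofReal ε • ν₀ + ENNReal.ofReal (1 - ε) • μ with hωdef
      haveI hωp : IsProbabilityMeasure ω := by
        constructor
        rw [hωdef, Measure.add_apply, Measure.smul_apply, Measure.smul_apply,
          measure_univ, measure_univ, smul_eq_mul, smul_eq_mul, mul_one, mul_one,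
          ← ENNReal.ofReal_add hε0.le (by linarith)]
        norm_num
      have hωpres : MeasurePreserving (⇑f) ω ω := by
        refine ⟨f.continuous.measurable, ?_⟩
        rw [hωdef, Measure.map_add _ _ f.continuous.measurable, Measure.map_smul,
          Measure.map_smul, hν₀pres.map_eq, hμerg.toMeasurePreserving.map_eq]
      have hl1 := tendsto_bseq_div f A hm hA hM1 hM ν₀ hν₀pres
      have hl2 := tendsto_bseq_div f A hm hA hM1 hM μ hμerg.toMeasurePreserving
      have hlim : Filter.Tendsto (fun n : ℕ => bseq f A ω n / n) Filter.atTop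
          (nhds (ε * mle (⇑f) A ν₀ + (1 - ε) * mle (⇑f) A μ)) := by
        have h := (hl1.const_mul ε).add (hl2.const_mul (1 - ε))
        refine h.congr fun n => ?_
        rw [hωdef, bseq_combo f A hm hA ν₀ μ hε0.le hε1.le n]
        ring
      have hub : mle (⇑f) A ω ≤ ε * mle (⇑f) A ν₀ + (1 - ε) * mle (⇑f) A μ := by
        refine ge_of_tendsto hlim ?_
        rw [Filter.eventually_atTop]
        refine ⟨1, fun n hn => ?_⟩
        obtain ⟨p, rfl⟩ := Nat.exists_eq_add_of_le hn
        have hc : mle (⇑f) A ω ≤ bseq f A ω (p + 1) / ((p : ℝ) + 1) := by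
          rw [mle_eq_iInf_bseq]
          exact ciInf_le (mle_terms_bddBelow f A hm hA hM1 hM ω) p
        rw [Nat.add_comm 1 p]
        push_cast
        exact hc
      have hmleω : mle (⇑f) A ω < mle (⇑f) A μ := by
        refine lt_of_le_of_lt hub ?_
        nlinarith [mul_lt_mul_of_pos_left hrlt hε0]
      obtain ⟨N, hN⟩ : ∃ N : ℕ, bseq f A ω (N + 1) / ((N : ℝ) + 1) < mle (⇑f) A μ := by
        rw [mle_eq_iInf_bseq] at hmleω
        exact exists_lt_of_ciInf_lt hmleω
      set g : C(X, ℝ) := ⟨fun x => Real.log ‖cocycle (⇑f) A x (N + 1)‖,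
        log_norm_cont f A hm hA (N + 1)⟩ with hgdef
      set gb := BoundedContinuousFunction.mkOfCompact g with hgbdef
      set G : Set (ProbabilityMeasure X) :=
        {ρ | (∫ x, gb x ∂(ρ : Measure X)) / ((N : ℝ) + 1) < mle (⇑f) A μ} with hGdef
      have hGopen : IsOpen G := by
        apply isOpen_lt ?_ continuous_const
        exact (MeasureTheory.ProbabilityMeasure.continuous_integral_boundedContinuousFunction
          gb).div_const _
      set ωP : ProbabilityMeasure X := ⟨ω, hωp⟩ with hωPdef
      have hωG : ωP ∈ G := hN
      have hksω : (t : EReal) < ksEnt (⇑f) ω := by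
        have hIω : ((1 - ε) * I : ℝ) ≤ ⨅ n : ℕ, partHn (⇑f) ω P (n + 1) / ((n : ℝ) + 1) := by
          apply le_ciInf
          intro n
          have h1 := partHn_combo_ge (⇑f) ν₀ μ hε0.le hε1.le P (n + 1)
          have h3 : 0 ≤ ε * partHn (⇑f) ν₀ P (n + 1) :=
            mul_nonneg hε0.le (partHn_nonneg _ _ _ _)
          have h2 : (1 - ε) * partHn (⇑f) μ P (n + 1) ≤ partHn (⇑f) ω P (n + 1) := by
            rw [hωdef]
            linarith
          calc (1 - ε) * I ≤ (1 - ε) * (partHn (⇑f) μ P (n + 1) / ((n : ℝ) + 1)) := by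
                refine mul_le_mul_of_nonneg_left ?_ (by linarith)
                exact ciInf_le (infH_bddBelow (⇑f) μ P) n
            _ ≤ partHn (⇑f) ω P (n + 1) / ((n : ℝ) + 1) := by
                rw [mul_div_assoc']
                gcongr
        have htIω : t < (1 - ε) * I := by nlinarith [hε2, hε0.le, htI]
        calc (t : EReal) < (((1 - ε) * I : ℝ) : EReal) := by exact_mod_cast htIω
          _ ≤ ((⨅ n : ℕ, partHn (⇑f) ω P (n + 1) / ((n : ℝ) + 1) : ℝ) : EReal) := by
              exact_mod_cast hIω
          _ ≤ ksEnt (⇑f) ω := ksEnt_ge_part (⇑f) ω hPm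
      obtain ⟨μ', hμ'G, hμ'erg, hμ'ent⟩ := hdense ωP hωpres G (hGopen.mem_nhds hωG) t hksω
      haveI hμ'p : IsProbabilityMeasure (μ' : Measure X) := μ'.2
      have hμ'lt : mle (⇑f) A (μ' : Measure X) < mle (⇑f) A μ := by
        have hc : mle (⇑f) A (μ' : Measure X) ≤
            bseq f A (μ' : Measure X) (N + 1) / ((N : ℝ) + 1) := by
          rw [mle_eq_iInf_bseq]
          exact ciInf_le (mle_terms_bddBelow f A hm hA hM1 hM _) N
        exact lt_of_le_of_lt hc hμ'G
      have hmem2 : min (ksEnt (⇑f) μ) (ksEnt (⇑f) (μ' : Measure X)) ∈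
          {h : EReal | ∃ μ ν : Measure X, IsProbabilityMeasure μ ∧ IsProbabilityMeasure ν ∧
            Ergodic (⇑f) μ ∧ Ergodic (⇑f) ν ∧ mle (⇑f) A ν < mle (⇑f) A μ ∧
            h = min (ksEnt (⇑f) μ) (ksEnt (⇑f) ν)} :=
        ⟨μ, μ', hμp, hμ'p, hμerg, hμ'erg, hμ'lt, rfl⟩
      have h6 : (t : EReal) < min (ksEnt (⇑f) μ) (ksEnt (⇑f) (μ' : Measure X)) :=
        lt_min ht2 hμ'ent
      exact lt_irrefl _ (lt_trans (lt_of_lt_of_le h6 (le_sSup hmem2)) ht1)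
    · apply sSup_le
      rintro h ⟨μ, ν, hμp, hνp, hμe, hνe, hlt, rfl⟩
      haveI := hμp
      haveI := hνp
      have hμmem : ksEnt (⇑f) μ ∈ {h : EReal | ∃ μ : Measure X, IsProbabilityMeasure μ ∧
          Ergodic (⇑f) μ ∧ sInf Sinv < mle (⇑f) A μ ∧ h = ksEnt (⇑f) μ} :=
        ⟨μ, hμp, hμe,
          lt_of_le_of_lt (csInf_le hSbdd ⟨ν, hνp, hνe.toMeasurePreserving, rfl⟩) hlt, rfl⟩
      exact le_trans (min_le_left _ _) (le_sSup hμmem)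
end

section
/- Let f and g be homeomorphisms of compact metric spaces which are topologically conjugate via h (so f = h^{-1} ∘ g ∘ h). Suppose g has the β-exponential shadowing property for some β > 0 and the inverse conjugacy h^{-1} is γ-Hölder continuous for some γ ∈ (0,1]. Then f has the βγ-exponential shadowing property. -/
open Filter MeasureTheory Set Topology Manifold
open scoped ENNReal NNReal

section ShadowingDefs

variable {X : Type*} [MetricSpace X]

/-- The cumulative times `c_i` associated with a sequence of block lengths `(n_i)_{i∈ℤ}`. -/
def csum (nseq : ℤ → ℕ) (i : ℤ) : ℤ :=
  if 0 ≤ i then ∑ j ∈ Finset.range i.toNat, (nseq j : ℤ)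
  else -∑ j ∈ Finset.range (-i).toNat, (nseq (i + j) : ℤ)

/-- `{x_i, n_i}_{i∈ℤ}` is a `δ`-pseudo-orbit for `f`: `d(f^{n_i}(x_i), x_{i+1}) < δ`. -/
def IsPseudoOrbit (f : X → X) (δ : ℝ) (x : ℤ → X) (nseq : ℤ → ℕ) : Prop :=
  (∀ i, 1 ≤ nseq i) ∧ ∀ i : ℤ, dist (f^[nseq i] (x i)) (x (i + 1)) < δ

/-- `p` is a `(τ,λ)`-shadowing point for the pseudo-orbit `{x_i, n_i}`:
`d(f^{c_i+j}(p), f^j(x_i)) < τ e^{-λ min{j, n_i - j}}` for `0 ≤ j ≤ n_i - 1`, `i ∈ ℤ`. -/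
def IsExpShadowed (f : X ≃ X) (τ lam : ℝ) (x : ℤ → X) (nseq : ℤ → ℕ) (p : X) : Prop :=
  ∀ i : ℤ, ∀ j < nseq i,
    dist ((f ^ (csum nseq i + (j : ℤ)) : X ≃ X) p) ((⇑f)^[j] (x i))
      < τ * Real.exp (-lam * ((min j (nseq i - j) : ℕ) : ℝ))

/-- The `λ`-exponential shadowing property. -/
def ExpShadowingWith (f : X ≃ X) (lam : ℝ) : Prop :=
  ∀ τ > (0 : ℝ), ∃ δ > (0 : ℝ), ∀ (x : ℤ → X) (nseq : ℤ → ℕ),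
    IsPseudoOrbit (⇑f) δ x nseq → ∃ p : X, IsExpShadowed f τ lam x nseq p

/-- The exponential shadowing property: `λ`-exponential shadowing for some `λ > 0`. -/
def ExpShadowing (f : X ≃ X) : Prop := ∃ lam > (0 : ℝ), ExpShadowingWith f lam

end ShadowingDefs

lemma myConjIterate {X Y : Type*} [MetricSpace X] [MetricSpace Y]
    (f : X ≃ₜ X) (g : Y ≃ₜ Y) (h : X ≃ₜ Y)
    (hconj : ∀ x : X, h (f x) = g (h x)) :
    ∀ n : ℕ, ∀ x : X, h ((⇑f)^[n] x) = (⇑g)^[n] (h x) := by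
  intro n
  induction n with
  | zero => intro x; simp
  | succ n ih =>
    intro x
    rw [Function.iterate_succ_apply', Function.iterate_succ_apply', hconj, ih]

lemma myConjZpow {X Y : Type*} [MetricSpace X] [MetricSpace Y]
    (f : X ≃ₜ X) (g : Y ≃ₜ Y) (h : X ≃ₜ Y)
    (hconj : ∀ x : X, h (f x) = g (h x)) :
    ∀ k : ℤ, ∀ x : X, h ((f.toEquiv ^ k) x) = (g.toEquiv ^ k) (h x) := by
  have hinv : ∀ x : X, h (f.toEquiv⁻¹ x) = g.toEquiv⁻¹ (h x) := by
    intro x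
    have := hconj (f.toEquiv⁻¹ x)
    have h1 : f (f.toEquiv⁻¹ x) = x := Equiv.apply_symm_apply f.toEquiv x
    rw [h1] at this
    calc h (f.toEquiv⁻¹ x) = g.toEquiv⁻¹ (g (h (f.toEquiv⁻¹ x))) :=
          (Equiv.symm_apply_apply g.toEquiv _).symm
      _ = g.toEquiv⁻¹ (h x) := by rw [← this]
  intro k
  induction k using Int.induction_on with
  | zero => intro x; simp
  | succ k ih =>
    intro x
    rw [zpow_add_one, zpow_add_one]
    have : (f.toEquiv ^ (k : ℤ) * f.toEquiv) x = (f.toEquiv ^ (k : ℤ)) (f x) := rfl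
    rw [this, ih, hconj x]
    rfl
  | pred k ih =>
    intro x
    rw [zpow_sub_one, zpow_sub_one]
    have : (f.toEquiv ^ (-k : ℤ) * f.toEquiv⁻¹) x = (f.toEquiv ^ (-k : ℤ)) (f.toEquiv⁻¹ x) := rfl
    rw [this]
    have h2 : (g.toEquiv ^ (-k : ℤ) * g.toEquiv⁻¹) (h x)
        = (g.toEquiv ^ (-k : ℤ)) (g.toEquiv⁻¹ (h x)) := rfl
    rw [h2, ← hinv, ih]

/-- **Remark 2.10.** If `f` is topologically conjugate to a homeomorphism `g` having the
`β`-exponential shadowing property and the inverse conjugacy is `γ`-Hölder continuous, then `f`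
has the `βγ`-exponential shadowing property. -/
theorem expShadowing_of_conjugacy_holder_inverse
    {X Y : Type*} [MetricSpace X] [CompactSpace X] [MetricSpace Y] [CompactSpace Y]
    (f : X ≃ₜ X) (g : Y ≃ₜ Y) (h : X ≃ₜ Y)
    (hconj : ∀ x : X, h (f x) = g (h x))
    (β : ℝ) (hβ : 0 < β) (hg : ExpShadowingWith g.toEquiv β)
    (γ : ℝ) (hγ0 : 0 < γ) (hγ1 : γ ≤ 1)
    (hHolder : ∃ L > (0 : ℝ), ∀ y y' : Y, dist (h.symm y) (h.symm y') ≤ L * dist y y' ^ γ) :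
    ExpShadowingWith f.toEquiv (β * γ) := by
  intro τ hτ
  obtain ⟨L, hL, hHold⟩ := hHolder
  -- choose τ' with L * τ'^γ = τ/2
  set τ' : ℝ := (τ / (2 * L)) ^ γ⁻¹ with hτ'def
  have hτ'pos : 0 < τ' := Real.rpow_pos_of_pos (by positivity) _
  have hτ'γ : τ' ^ γ = τ / (2 * L) :=
    Real.rpow_inv_rpow (by positivity) (ne_of_gt hγ0)
  obtain ⟨δ', hδ', hshadow⟩ := hg τ' hτ'pos
  -- uniform continuity of h
  have huc : UniformContinuous (⇑h) :=
    CompactSpace.uniformContinuous_of_continuous h.continuous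
  rw [Metric.uniformContinuous_iff] at huc
  obtain ⟨δ, hδ, hδprop⟩ := huc δ' hδ'
  refine ⟨δ, hδ, ?_⟩
  intro x nseq hpo
  -- image pseudo-orbit
  have hpo' : IsPseudoOrbit (⇑g.toEquiv) δ' (fun i => h (x i)) nseq := by
    refine ⟨hpo.1, fun i => ?_⟩
    have : (⇑g.toEquiv)^[nseq i] (h (x i)) = h ((⇑f)^[nseq i] (x i)) := by
      simp only [Homeomorph.coe_toEquiv]
      exact (myConjIterate f g h hconj _ _).symm
    rw [this]
    exact hδprop (hpo.2 i)
  obtain ⟨q, hq⟩ := hshadow _ nseq hpo'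
  refine ⟨h.symm q, ?_⟩
  intro i j hj
  have hq' := hq i j hj
  set m : ℝ := ((min j (nseq i - j) : ℕ) : ℝ) with hm
  have hm0 : 0 ≤ m := Nat.cast_nonneg _
  -- rewrite points through h.symm
  have key1 : (f.toEquiv ^ (csum nseq i + (j : ℤ)) : X ≃ X) (h.symm q)
      = h.symm ((g.toEquiv ^ (csum nseq i + (j : ℤ)) : Y ≃ Y) q) := by
    apply h.toEquiv.injective
    have := myConjZpow f g h hconj (csum nseq i + (j : ℤ)) (h.symm q)
    simp only [Homeomorph.coe_toEquiv] at this ⊢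
    rw [this]
    simp
  have key2 : (⇑f.toEquiv)^[j] (x i) = h.symm ((⇑g.toEquiv)^[j] (h (x i))) := by
    simp only [Homeomorph.coe_toEquiv]
    rw [← myConjIterate f g h hconj]
    simp
  rw [key1, key2]
  have hle := hHold ((g.toEquiv ^ (csum nseq i + (j : ℤ)) : Y ≃ Y) q)
    ((⇑g.toEquiv)^[j] (h (x i)))
  have hdY : dist ((g.toEquiv ^ (csum nseq i + (j : ℤ)) : Y ≃ Y) q)
      ((⇑g.toEquiv)^[j] (h (x i))) < τ' * Real.exp (-β * m) := hq'
  have hpow : dist ((g.toEquiv ^ (csum nseq i + (j : ℤ)) : Y ≃ Y) q)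
      ((⇑g.toEquiv)^[j] (h (x i))) ^ γ < (τ' * Real.exp (-β * m)) ^ γ :=
    Real.rpow_lt_rpow dist_nonneg hdY hγ0
  have hmul : (τ' * Real.exp (-β * m)) ^ γ = τ' ^ γ * Real.exp (-(β * γ) * m) := by
    rw [Real.mul_rpow (le_of_lt hτ'pos) (Real.exp_nonneg _), ← Real.exp_mul]
    ring_nf
  calc dist (h.symm ((g.toEquiv ^ (csum nseq i + (j : ℤ)) : Y ≃ Y) q))
        (h.symm ((⇑g.toEquiv)^[j] (h (x i))))
      ≤ L * dist ((g.toEquiv ^ (csum nseq i + (j : ℤ)) : Y ≃ Y) q)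
          ((⇑g.toEquiv)^[j] (h (x i))) ^ γ := hle
    _ < L * (τ' * Real.exp (-β * m)) ^ γ := by
        exact (mul_lt_mul_iff_right₀ hL).mpr hpow
    _ = L * (τ' ^ γ * Real.exp (-(β * γ) * m)) := by rw [hmul]
    _ = (τ / 2) * Real.exp (-(β * γ) * m) := by
        rw [hτ'γ]; field_simp
    _ < τ * Real.exp (-(β * γ) * m) := by
        have : (0:ℝ) < Real.exp (-(β * γ) * m) := Real.exp_pos _
        nlinarith
end
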